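/- arXiv:1805.03628 — 4 statements merged into one kernel-verified Lean document; each statement's English description precedes it below -/
import Mathlib

section
/- Let f and g be complex polynomials of degree at most n, not both zero. The Bezout matrix B(f,g) ∈ M_n(ℂ) is singular if and only if f and g have a common root (in ℂ) or both have degree strictly less than n. -/
open Polynomial

/-- The Bezout matrix of `f, g` (degrees ≤ n): coefficient matrix of
`(f(t)g(s) - f(s)g(t))/(t - s)`. -/
noncomputable def bezoutMatrix (n : ℕ) (f g : Polynomial ℂ) : Matrix (Fin n) (Fin n) ℂ :=
  fun i j =>
    (((f.map C * C g - C f * g.map C) /ₘ (X - C X)).coeff i).coeff j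


noncomputable def bez (f g : Polynomial ℂ) : Polynomial (Polynomial ℂ) :=
  (f.map C * C g - C f * g.map C) /ₘ (X - C X)

lemma divByMonic_C_mul (a : Polynomial ℂ) (p q : Polynomial (Polynomial ℂ)) (hq : q.Monic) :
    (C a * p) /ₘ q = C a * (p /ₘ q) :=
  (div_modByMonic_unique (C a * (p /ₘ q)) (C a * (p %ₘ q)) hq
    ⟨by linear_combination (C a : Polynomial (Polynomial ℂ)) * modByMonic_add_div p q,
     lt_of_le_of_lt (le_trans (degree_mul_le _ _)
       (by simpa using add_le_add_left (degree_C_le (a := a)) (degree (p %ₘ q))))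
       (degree_modByMonic_lt p hq)⟩).1

lemma divByMonic_neg (p q : Polynomial (Polynomial ℂ)) (hq : q.Monic) :
    (-p) /ₘ q = -(p /ₘ q) :=
  (div_modByMonic_unique (-(p /ₘ q)) (-(p %ₘ q)) hq
    ⟨by linear_combination - modByMonic_add_div p q,
     by simpa [degree_neg] using degree_modByMonic_lt p hq⟩).1

lemma num_dvd (f g : Polynomial ℂ) :
    (X - C (X : Polynomial ℂ)) ∣ (f.map C * C g - C f * g.map C) := by
  have h1 : (X - C (X : Polynomial ℂ)) ∣ f.map C - C f := by
    simpa [eval_map, eval₂_C_X] using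
      (X_sub_C_dvd_sub_C_eval (a := (X : Polynomial ℂ)) (p := f.map C))
  have h2 : (X - C (X : Polynomial ℂ)) ∣ g.map C - C g := by
    simpa [eval_map, eval₂_C_X] using
      (X_sub_C_dvd_sub_C_eval (a := (X : Polynomial ℂ)) (p := g.map C))
  have : f.map C * C g - C f * g.map C
      = (f.map C - C f) * C g - C f * (g.map C - C g) := by ring
  rw [this]
  exact dvd_sub (h1.mul_right _) (h2.mul_left _)

lemma bez_key (f g : Polynomial ℂ) :
    (X - C (X : Polynomial ℂ)) * bez f g = f.map C * C g - C f * g.map C := by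
  have hm : (X - C (X : Polynomial ℂ)).Monic := monic_X_sub_C _
  have h := modByMonic_add_div (f.map C * C g - C f * g.map C) (X - C (X : Polynomial ℂ))
  rwa [(modByMonic_eq_zero_iff_dvd hm).2 (num_dvd f g), zero_add] at h

lemma bez_natDegree_le (f g : Polynomial ℂ) (m : ℕ) (hf : f.natDegree ≤ m)
    (hg : g.natDegree ≤ m) : (bez f g).natDegree ≤ m - 1 := by
  have hm : (X - C (X : Polynomial ℂ)).Monic := monic_X_sub_C _
  rw [bez, natDegree_divByMonic _ hm, natDegree_X_sub_C]
  have h1 : (f.map C * C g - C f * g.map C).natDegree ≤ m := by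
    refine le_trans (natDegree_sub_le _ _) (max_le ?_ ?_)
    · refine le_trans (natDegree_mul_le) ?_
      have : (f.map (C : ℂ →+* Polynomial ℂ)).natDegree ≤ m := le_trans natDegree_map_le hf
      simpa using this
    · refine le_trans (natDegree_mul_le) ?_
      have : (g.map (C : ℂ →+* Polynomial ℂ)).natDegree ≤ m := le_trans natDegree_map_le hg
      simpa using this
  omega

lemma num_natDegree_le (f g : Polynomial ℂ) (n : ℕ) (hf : f.natDegree ≤ n)
    (hg : g.natDegree ≤ n) : (f.map C * C g - C f * g.map C).natDegree ≤ n := by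
  refine le_trans (natDegree_sub_le _ _) (max_le ?_ ?_)
  · refine le_trans (natDegree_mul_le) ?_
    have : (f.map (C : ℂ →+* Polynomial ℂ)).natDegree ≤ n := le_trans natDegree_map_le hf
    simpa using this
  · refine le_trans (natDegree_mul_le) ?_
    have : (g.map (C : ℂ →+* Polynomial ℂ)).natDegree ≤ n := le_trans natDegree_map_le hg
    simpa using this

lemma bez_coeff_eq_zero (f g : Polynomial ℂ) (n : ℕ) (hf : f.natDegree ≤ n)
    (hg : g.natDegree ≤ n) {i : ℕ} (hi : n ≤ i) : (bez f g).coeff i = 0 := by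
  have hb := bez_natDegree_le f g n hf hg
  rcases Nat.eq_zero_or_pos n with h | h
  · subst h
    have hm : (X - C (X : Polynomial ℂ)).Monic := monic_X_sub_C _
    have hz : bez f g = 0 := by
      rw [bez, divByMonic_eq_zero_iff hm]
      have h1 := num_natDegree_le f g 0 hf hg
      refine lt_of_le_of_lt (b := ((0:ℕ) : WithBot ℕ))
        (le_trans degree_le_natDegree (by exact_mod_cast Nat.cast_le.mpr h1)) ?_
      rw [degree_X_sub_C]
      exact_mod_cast zero_lt_one
    rw [hz, coeff_zero]
  · exact coeff_eq_zero_of_natDegree_lt (by omega)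

lemma bez_eval_root (f g : Polynomial ℂ) (z : ℂ) (hfz : f.eval z = 0) (hgz : g.eval z = 0) :
    (bez f g).eval (C z) = 0 := by
  have h := congrArg (Polynomial.eval (C z)) (bez_key f g)
  simp only [eval_mul, eval_sub, eval_X, eval_C, eval_map] at h
  rw [eval₂_at_apply, eval₂_at_apply, hfz, hgz, map_zero, zero_mul, mul_zero, sub_zero] at h
  rcases mul_eq_zero.mp h with h' | h'
  · exact absurd (by linear_combination -h' : X - C z = (0:Polynomial ℂ)) (X_sub_C_ne_zero z)
  · exact h'

lemma key (n : ℕ) (hn : 0 < n) (f g : Polynomial ℂ) (hf : f.Monic) (hfn : f.natDegree = n)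
    (hg : g.natDegree ≤ n) (hco : IsCoprime f g) (v : Fin n → ℂ)
    (hv : (Matrix.of fun i j : Fin n => ((bez f g).coeff i).coeff j).mulVec v = 0) :
    v = 0 := by
  classical
  set vt : Polynomial ℂ := ∑ j : Fin n, C (v j) * X ^ (n - 1 - (j : ℕ)) with hvt_def
  have hvt_coeff : ∀ j : Fin n, vt.coeff (n - 1 - (j : ℕ)) = v j := by
    intro j
    rw [hvt_def, finset_sum_coeff]
    rw [Finset.sum_eq_single j]
    · simp [coeff_X_pow]
    · intro b _ hb
      have hbj : n - 1 - (b : ℕ) ≠ n - 1 - (j : ℕ) := by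
        have hb' : (b : ℕ) < n := b.isLt
        have hj' : (j : ℕ) < n := j.isLt
        intro hc
        exact hb (Fin.ext (by omega))
      rw [coeff_C_mul, coeff_X_pow, if_neg (fun hc => hbj (Eq.symm hc)), mul_zero]
    · simp
  have hvt_natDegree : vt.natDegree ≤ n - 1 := by
    refine natDegree_sum_le_of_forall_le _ _ ?_
    intro j _
    refine le_trans natDegree_mul_le ?_
    simp [natDegree_X_pow]
  set F : Polynomial ℂ := f * vt with hF_def
  set G : Polynomial ℂ := g * vt with hG_def
  set W : Polynomial (Polynomial ℂ) := bez f g * C vt with hW_def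
  have hW : (X - C (X : Polynomial ℂ)) * W = f.map C * C G - g.map C * C F := by
    rw [hW_def, hF_def, hG_def, map_mul, map_mul]
    have h := bez_key f g
    calc (X - C (X : Polynomial ℂ)) * (bez f g * C vt)
        = ((X - C (X : Polynomial ℂ)) * bez f g) * C vt := by ring
      _ = (f.map C * C g - C f * g.map C) * C vt := by rw [h]
      _ = f.map C * (C g * C vt) - g.map C * (C f * C vt) := by ring
  have hrec : ∀ i : ℕ, W.coeff i - X * W.coeff (i + 1)
      = C (f.coeff (i + 1)) * G - C (g.coeff (i + 1)) * F := by
    intro i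
    have h := congrArg (fun p : Polynomial (Polynomial ℂ) => p.coeff (i + 1)) hW
    simpa only [sub_mul, coeff_sub, coeff_X_mul, coeff_C_mul, coeff_mul_C, coeff_map] using h
  have hWtop : ∀ i : ℕ, n ≤ i → W.coeff i = 0 := by
    intro i hi
    apply coeff_eq_zero_of_natDegree_lt
    have h1 : W.natDegree ≤ (bez f g).natDegree + (C vt).natDegree := natDegree_mul_le
    have h2 := bez_natDegree_le f g n hfn.le hg
    have h3 : (C vt : Polynomial (Polynomial ℂ)).natDegree = 0 := natDegree_C _
    omega
  have hker : ∀ i : ℕ, (W.coeff i).coeff (n - 1) = 0 := by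
    intro i
    by_cases hi : i < n
    · have h := congrFun hv ⟨i, hi⟩
      simp only [Matrix.mulVec, dotProduct, Matrix.of_apply, Pi.zero_apply] at h
      have hWc : W.coeff i = (bez f g).coeff i * vt := coeff_mul_C _ _ _
      rw [hWc, coeff_mul, Finset.Nat.sum_antidiagonal_eq_sum_range_succ_mk]
      have hr : (n - 1).succ = n := by omega
      rw [hr]
      rw [Finset.sum_range (f := fun k => ((bez f g).coeff i).coeff k * vt.coeff (n - 1 - k))]
      rw [← h]
      refine Finset.sum_congr rfl (fun j _ => ?_)
      rw [hvt_coeff j]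
    · rw [hWtop i (by omega), coeff_zero]
  set d : ℕ → Polynomial ℂ := fun k => C (f.coeff k) * G - C (g.coeff k) * F with hd_def
  have hsolve : ∀ j : ℕ, j ≤ n → X ^ (n - j) * W.coeff (n - j)
      = ∑ k ∈ Finset.Ico (n - j) n, X ^ k * d (k + 1) := by
    intro j
    induction j with
    | zero =>
      intro _
      simp [hWtop n le_rfl]
    | succ j ih =>
      intro hj
      have ihx := ih (by omega)
      have hi1 : n - (j + 1) + 1 = n - j := by omega
      have hlt : n - (j + 1) < n := by omega
      have hr := hrec (n - (j + 1))
      have hr' : W.coeff (n - (j + 1))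
          = X * W.coeff (n - (j + 1) + 1) + d (n - (j + 1) + 1) := by
        rw [hd_def]
        linear_combination hr
      rw [Finset.sum_eq_sum_Ico_succ_bot hlt]
      have hXpow : (X : Polynomial ℂ) ^ (n - j) = X ^ (n - (j + 1)) * X := by
        rw [← pow_succ, hi1]
      calc X ^ (n - (j + 1)) * W.coeff (n - (j + 1))
          = X ^ (n - (j + 1)) * (X * W.coeff (n - (j + 1) + 1) + d (n - (j + 1) + 1)) := by
            rw [hr']
        _ = X ^ (n - j) * W.coeff (n - j) + X ^ (n - (j + 1)) * d (n - (j + 1) + 1) := by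
            rw [hXpow, hi1]; ring
        _ = X ^ (n - (j + 1)) * d (n - (j + 1) + 1) + ∑ k ∈ Finset.Ico (n - j) n, X ^ k * d (k + 1) := by
            rw [ihx]; ring
        _ = X ^ (n - (j + 1)) * d (n - (j + 1) + 1) + ∑ k ∈ Finset.Ico (n - (j + 1) + 1) n, X ^ k * d (k + 1) := by
            rw [hi1]
  have hA : ∀ i : ℕ, i < n → ∑ k ∈ Finset.Ico i n,
      (f.coeff (k + 1) * G.coeff (n - 1 + i - k) - g.coeff (k + 1) * F.coeff (n - 1 + i - k)) = 0 := by
    intro i hi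
    have hs := hsolve (n - i) (by omega)
    have hni : n - (n - i) = i := by omega
    rw [hni] at hs
    have h := congrArg (fun p : Polynomial ℂ => p.coeff (n - 1 + i)) hs
    have hL : (X ^ i * W.coeff i).coeff (n - 1 + i) = 0 :=
      (coeff_X_pow_mul (W.coeff i) i (n - 1)).trans (hker i)
    rw [hL] at h
    rw [finset_sum_coeff] at h
    have h2 : ∀ k ∈ Finset.Ico i n, (X ^ k * d (k + 1)).coeff (n - 1 + i)
        = f.coeff (k + 1) * G.coeff (n - 1 + i - k) - g.coeff (k + 1) * F.coeff (n - 1 + i - k) := by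
      intro k hk
      rw [Finset.mem_Ico] at hk
      have hkle : n - 1 + i = (n - 1 + i - k) + k := by omega
      rw [hkle, coeff_X_pow_mul, hd_def]
      simp [coeff_sub, coeff_C_mul]
    rw [Finset.sum_congr rfl h2] at h
    exact h.symm
  -- division by X^n
  have hmonXn : (X ^ n : Polynomial ℂ).Monic := monic_X_pow n
  set Glo : Polynomial ℂ := G %ₘ X ^ n with hGlo_def
  set Flo : Polynomial ℂ := F %ₘ X ^ n with hFlo_def
  have hGdec : Glo + X ^ n * (G /ₘ X ^ n) = G := modByMonic_add_div G (X ^ n)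
  have hFdec : Flo + X ^ n * (F /ₘ X ^ n) = F := modByMonic_add_div F (X ^ n)
  have hfg0 : f * G = g * F := by rw [hF_def, hG_def]; ring
  have hmod_coeff : ∀ (Q : Polynomial ℂ) (b : ℕ),
      (Q %ₘ X ^ n).coeff b = if b < n then Q.coeff b else 0 := by
    intro Q b
    by_cases hb : b < n
    · have h := congrArg (fun p : Polynomial ℂ => p.coeff b) (modByMonic_add_div Q (X ^ n))
      simp only [coeff_add, coeff_X_pow_mul'] at h
      rw [if_pos hb, ← h, if_neg (by omega), add_zero]
    · rw [if_neg hb]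
      refine coeff_eq_zero_of_degree_lt ?_
      have h1 : (Q %ₘ X ^ n).degree < (X ^ n : Polynomial ℂ).degree := degree_modByMonic_lt Q hmonXn
      rw [degree_X_pow] at h1
      exact lt_of_lt_of_le h1 (by exact_mod_cast (by omega : n ≤ b))
  have hGlo_coeff : ∀ b : ℕ, Glo.coeff b = if b < n then G.coeff b else 0 := fun b => hmod_coeff G b
  have hFlo_coeff : ∀ b : ℕ, Flo.coeff b = if b < n then F.coeff b else 0 := fun b => hmod_coeff F b
  have hconv : ∀ (p q Q : Polynomial ℂ), p.natDegree ≤ n →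
      (∀ b : ℕ, q.coeff b = if b < n then Q.coeff b else 0) →
      ∀ i : ℕ, (p * q).coeff (n + i)
        = ∑ j ∈ Finset.range (n - i), p.coeff (i + j + 1) * Q.coeff (n - 1 - j) := by
    intro p q Q hp hq i
    rw [coeff_mul, Finset.Nat.sum_antidiagonal_eq_sum_range_succ_mk]
    have hsub : Finset.Ico (i + 1) (n + 1) ⊆ Finset.range ((n + i).succ) := by
      intro k hk
      rw [Finset.mem_Ico] at hk
      rw [Finset.mem_range]
      omega
    rw [← Finset.sum_subset hsub (fun k hk hk2 => ?_)]
    · rw [Finset.sum_Ico_eq_sum_range]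
      have hrange : n + 1 - (i + 1) = n - i := by omega
      rw [hrange]
      refine Finset.sum_congr rfl (fun j hj => ?_)
      rw [Finset.mem_range] at hj
      rw [hq (n + i - (i + 1 + j)), show n + i - (i + 1 + j) = n - 1 - j by omega,
        if_pos (by omega), show i + 1 + j = i + j + 1 by omega]
    · rw [Finset.mem_range] at hk
      rw [Finset.mem_Ico] at hk2
      push_neg at hk2
      by_cases hk3 : k ≤ i
      · rw [hq (n + i - k), if_neg (by omega), mul_zero]
      · have : n + 1 ≤ k := hk2 (by omega)
        rw [coeff_eq_zero_of_natDegree_lt (by omega), zero_mul]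
  have hE : f * Glo = g * Flo := by
    have hXE : f * Glo - g * Flo = X ^ n * (g * (F /ₘ X ^ n) - f * (G /ₘ X ^ n)) := by
      linear_combination f * hGdec - g * hFdec + hfg0
    have hcoeff : ∀ m : ℕ, (f * Glo - g * Flo).coeff m = 0 := by
      intro m
      by_cases hm : m < n
      · rw [hXE, coeff_X_pow_mul', if_neg (by omega)]
      · have hmeq : m = n + (m - n) := by omega
        set i := m - n with hi_def
        rw [hmeq, coeff_sub, hconv f Glo G hfn.le hGlo_coeff i, hconv g Flo F hg hFlo_coeff i]
        by_cases hin : i < n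
        · have hAi := hA i hin
          rw [Finset.sum_Ico_eq_sum_range] at hAi
          rw [← Finset.sum_sub_distrib]
          rw [← hAi]
          refine Finset.sum_congr rfl (fun j hj => ?_)
          rw [Finset.mem_range] at hj
          rw [show i + j + 1 = i + j + 1 by rfl, show n - 1 + i - (i + j) = n - 1 - j by omega]
        · rw [show n - i = 0 by omega]
          simp
    have h0 : f * Glo - g * Flo = 0 := Polynomial.ext fun m => by rw [hcoeff m, coeff_zero]
    exact sub_eq_zero.mp h0

  -- conclude
  have hf0 : f ≠ 0 := hf.ne_zero
  have hFlo0 : Flo = 0 := by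
    have hdvd : f ∣ g * Flo := Dvd.intro _ hE
    have hdvd2 : f ∣ Flo := hco.dvd_of_dvd_mul_left hdvd
    refine eq_zero_of_dvd_of_degree_lt hdvd2 ?_
    have h1 : Flo.degree < (X ^ n : Polynomial ℂ).degree := degree_modByMonic_lt F hmonXn
    rw [degree_X_pow] at h1
    rwa [degree_eq_natDegree hf0, hfn]
  have hGlo0 : Glo = 0 := by
    have h0 : f * Glo = 0 := by rw [hE, hFlo0, mul_zero]
    exact (mul_eq_zero.mp h0).resolve_left hf0
  have hXF : (X ^ n : Polynomial ℂ) ∣ F := (modByMonic_eq_zero_iff_dvd hmonXn).1 hFlo0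
  have hXG : (X ^ n : Polynomial ℂ) ∣ G := (modByMonic_eq_zero_iff_dvd hmonXn).1 hGlo0
  obtain ⟨a, b, hab⟩ := hco
  have hvt_dvd : (X ^ n : Polynomial ℂ) ∣ vt := by
    have hvtFG : vt = a * F + b * G := by
      rw [hF_def, hG_def]; linear_combination vt * hab.symm
    rw [hvtFG]
    exact dvd_add (hXF.mul_left a) (hXG.mul_left b)
  have hvt0 : vt = 0 := by
    by_contra hvtne
    have := natDegree_le_of_dvd hvt_dvd hvtne
    rw [natDegree_X_pow] at this
    omega
  funext j
  have := hvt_coeff j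
  rw [hvt0, coeff_zero] at this
  simpa using this.symm

lemma isCoprime_of_no_common_root (f g : Polynomial ℂ) (hf0 : f ≠ 0)
    (hroot : ∀ z : ℂ, ¬(f.eval z = 0 ∧ g.eval z = 0)) : IsCoprime f g := by
  classical
  by_contra hnc
  set d : Polynomial ℂ := EuclideanDomain.gcd f g with hd_def
  have hd : ¬IsUnit d := fun h => hnc ((EuclideanDomain.gcd_isUnit_iff).mp h)
  have hd0 : d ≠ 0 := fun h => hf0 ((EuclideanDomain.gcd_eq_zero_iff.mp h).1)
  have hdeg : 0 < d.degree := degree_pos_of_ne_zero_of_nonunit hd0 hd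
  obtain ⟨z, hz⟩ := Complex.exists_root hdeg
  refine hroot z ⟨?_, ?_⟩
  · exact eval_eq_zero_of_dvd_of_eval_eq_zero (EuclideanDomain.gcd_dvd_left f g) hz
  · exact eval_eq_zero_of_dvd_of_eval_eq_zero (EuclideanDomain.gcd_dvd_right f g) hz

lemma det_ne_zero (n : ℕ) (hn : 0 < n) (f g : Polynomial ℂ) (hfn : f.natDegree = n)
    (hg : g.natDegree ≤ n) (hroot : ∀ z : ℂ, ¬(f.eval z = 0 ∧ g.eval z = 0)) :
    (Matrix.of fun i j : Fin n => ((bez f g).coeff (i : ℕ)).coeff (j : ℕ)).det ≠ 0 := by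
  classical
  have hf0 : f ≠ 0 := by
    intro h
    rw [h, natDegree_zero] at hfn
    omega
  set c : ℂ := f.leadingCoeff with hc_def
  have hc : c ≠ 0 := leadingCoeff_ne_zero.mpr hf0
  set fh : Polynomial ℂ := f * C c⁻¹ with hfh_def
  have hmon : fh.Monic := monic_mul_leadingCoeff_inv hf0
  have hfhn : fh.natDegree = n := by
    rw [hfh_def, natDegree_mul_leadingCoeff_inv f hf0, hfn]
  have hfeq : f = C c * fh := by
    rw [hfh_def]
    rw [mul_comm (C c), mul_assoc, ← C_mul, inv_mul_cancel₀ hc, C_1, mul_one]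
  have hcop : IsCoprime fh g := by
    have h1 : IsCoprime f g := isCoprime_of_no_common_root f g hf0 hroot
    have h2 : IsCoprime (C c⁻¹) g := ⟨C c, 0, by
      rw [zero_mul, add_zero, mul_comm, ← C_mul, inv_mul_cancel₀ hc, C_1]⟩
    exact (IsCoprime.mul_left h1 h2 : IsCoprime (f * C c⁻¹) g)
  have hbez : bez f g = C (C c) * bez fh g := by
    have hnum : f.map C * C g - C f * g.map C
        = C (C c) * (fh.map C * C g - C fh * g.map C) := by
      rw [hfeq]
      rw [Polynomial.map_mul, map_C, map_mul]
      ring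
    rw [bez, hnum, divByMonic_C_mul _ _ _ (monic_X_sub_C _), ← bez]
  have hmat : (Matrix.of fun i j : Fin n => ((bez f g).coeff (i : ℕ)).coeff (j : ℕ))
      = c • (Matrix.of fun i j : Fin n => ((bez fh g).coeff (i : ℕ)).coeff (j : ℕ)) := by
    ext i j
    simp only [Matrix.of_apply, Matrix.smul_apply, smul_eq_mul]
    rw [hbez, coeff_C_mul, coeff_C_mul]
  rw [hmat, Matrix.det_smul]
  intro hdet
  rcases mul_eq_zero.mp hdet with h | h
  · exact pow_ne_zero _ hc h
  · obtain ⟨v, hv0, hvz⟩ := Matrix.exists_mulVec_eq_zero_iff.mpr h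
    exact hv0 (key n hn fh g hmon hfhn hg hcop v hvz)

lemma bez_swap (f g : Polynomial ℂ) : bez g f = -(bez f g) := by
  have hnum : g.map C * C f - C g * f.map C
      = -(f.map C * C g - C f * g.map C) := by ring
  rw [bez, hnum, divByMonic_neg _ _ (monic_X_sub_C _), ← bez]

lemma bezoutMatrix_eq (n : ℕ) (f g : Polynomial ℂ) :
    bezoutMatrix n f g = Matrix.of fun i j : Fin n => ((bez f g).coeff (i : ℕ)).coeff (j : ℕ) :=
  rfl

/-- For `f, g` of degree at most `n`, not both zero, the Bezout matrix `B(f,g)` is singular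
iff `f` and `g` have a common root in `ℂ` or both have degree strictly less than `n`. -/
theorem bezoutMatrix_singular_iff (n : ℕ) (f g : Polynomial ℂ)
    (hfg : ¬(f = 0 ∧ g = 0)) (hf : f.natDegree ≤ n) (hg : g.natDegree ≤ n) :
    (bezoutMatrix n f g).det = 0 ↔
      (∃ z : ℂ, f.eval z = 0 ∧ g.eval z = 0) ∨ (f.natDegree < n ∧ g.natDegree < n) := by
  classical
  rcases Nat.eq_zero_or_pos n with hn | hn
  · subst hn
    rw [Matrix.det_fin_zero]
    constructor
    · intro h
      exact absurd h one_ne_zero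
    · rintro (⟨z, hz1, hz2⟩ | ⟨h1, h2⟩)
      · refine absurd ?_ hfg
        constructor
        · have hfc : f = C (f.coeff 0) := eq_C_of_natDegree_le_zero hf
          rw [hfc, eval_C] at hz1
          rw [hfc, hz1, C_0]
        · have hgc : g = C (g.coeff 0) := eq_C_of_natDegree_le_zero hg
          rw [hgc, eval_C] at hz2
          rw [hgc, hz2, C_0]
      · omega
  · constructor
    · intro hdet
      by_contra hcon
      push_neg at hcon
      obtain ⟨hA, hB⟩ := hcon
      have hcase : f.natDegree = n ∨ g.natDegree = n := by omega
      have hroot : ∀ z : ℂ, ¬(f.eval z = 0 ∧ g.eval z = 0) := by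
        intro z hz
        exact hA z hz.1 hz.2
      rcases hcase with hfn | hgn
      · exact det_ne_zero n hn f g hfn hg hroot (by rw [← bezoutMatrix_eq]; exact hdet)
      · have hroot' : ∀ z : ℂ, ¬(g.eval z = 0 ∧ f.eval z = 0) := by
          intro z hz
          exact hroot z ⟨hz.2, hz.1⟩
        refine det_ne_zero n hn g f hgn hf hroot' ?_
        rw [← bezoutMatrix_eq]
        have hswap : bezoutMatrix n g f = -(bezoutMatrix n f g) := by
          rw [bezoutMatrix_eq, bezoutMatrix_eq]
          ext i j
          simp only [Matrix.of_apply, Matrix.neg_apply]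
          rw [bez_swap, coeff_neg, coeff_neg]
        rw [hswap, Matrix.det_neg, hdet, mul_zero]
    · rintro (⟨z, hz1, hz2⟩ | ⟨h1, h2⟩)
      · -- common root: left kernel vector of powers of z
        apply Matrix.exists_vecMul_eq_zero_iff.mp
        refine ⟨fun i : Fin n => z ^ (i : ℕ), ?_, ?_⟩
        · intro h0
          have := congrFun h0 ⟨0, hn⟩
          simp at this
        · funext j
          simp only [Matrix.vecMul, dotProduct, bezoutMatrix_eq, Matrix.of_apply,
            Pi.zero_apply]
          have he := bez_eval_root f g z hz1 hz2
          have hdeg : (bez f g).natDegree < n := by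
            have := bez_natDegree_le f g n hf hg
            omega
          have hev := eval_eq_sum_range' hdeg (C z)
          rw [he] at hev
          have hc := congrArg (fun p : Polynomial ℂ => p.coeff (j : ℕ)) hev.symm
          simp only [coeff_zero, finset_sum_coeff] at hc
          rw [Finset.sum_range (f := fun i => ((bez f g).coeff i * (C z) ^ i).coeff (j : ℕ))] at hc
          rw [← hc]
          refine Finset.sum_congr rfl (fun i _ => ?_)
          rw [← C_pow, coeff_mul_C]
          ring
      · -- both degrees < n : row n-1 is zero
        apply Matrix.det_eq_zero_of_row_eq_zero ⟨n - 1, by omega⟩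
        intro j
        rw [bezoutMatrix_eq]
        simp only [Matrix.of_apply]
        rw [bez_coeff_eq_zero f g (n - 1) (by omega) (by omega) (le_refl (n - 1)), coeff_zero]
end

section
/- Let f and g be complex polynomials with deg f ≤ n and deg g = n, and suppose gcd(f,g) has degree d. Then the kernel of the Bezout matrix B(f,g) ∈ M_n(ℂ) has dimension exactly d. -/
open Polynomial

lemma coeff_divByMonic_X_pow (w : ℂ[X]) (n k : ℕ) : (w /ₘ X ^ n).coeff k = w.coeff (n + k) := by
  conv_rhs => rw [← modByMonic_add_div w (X ^ n)]
  rw [coeff_add, Nat.add_comm n k, coeff_X_pow_mul,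
    coeff_eq_zero_of_degree_lt (lt_of_lt_of_le (degree_modByMonic_lt w (monic_X_pow n))
      (by rw [degree_X_pow]; exact_mod_cast Nat.le_add_left n k)), zero_add]

lemma eval_divByMonic_X_pow {n : ℕ} (hn : 1 ≤ n) (s₀ : ℂ) (u w : ℂ[X])
    (huw : (X - C s₀) * u = w) :
    (w /ₘ X ^ n).eval s₀ = u.coeff (n - 1) := by
  have key : w /ₘ X ^ n = C (u.coeff (n - 1)) + (X - C s₀) * (u /ₘ X ^ n) := by
    ext k
    rw [coeff_divByMonic_X_pow, ← huw, coeff_add, coeff_C]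
    cases k with
    | zero =>
      rw [show n + 0 = (n - 1) + 1 by omega, sub_mul, coeff_sub, coeff_X_mul, coeff_C_mul,
        if_pos rfl, sub_mul, coeff_sub, mul_coeff_zero, coeff_X_zero, coeff_C_mul,
        coeff_divByMonic_X_pow, zero_mul, zero_sub,
        show (n - 1) + 1 = n + 0 by omega]
      ring
    | succ k =>
      rw [show n + (k + 1) = (n + k) + 1 by omega, sub_mul, coeff_sub, coeff_X_mul, coeff_C_mul,
        if_neg (by omega), sub_mul, coeff_sub, coeff_X_mul, coeff_C_mul,
        coeff_divByMonic_X_pow, coeff_divByMonic_X_pow, zero_add,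
        show n + (k + 1) = (n + k) + 1 by omega]
  rw [key]
  simp

lemma coeff_mul_Q {n : ℕ} (w : ℂ[X]) (u : Fin n → ℂ) :
    (w * ∑ k : Fin n, C (u k) * X ^ (k : ℕ)).coeff (n - 1)
      = ∑ k : Fin n, u k * w.coeff (n - 1 - (k : ℕ)) := by
  rw [Finset.mul_sum, finset_sum_coeff]
  refine Finset.sum_congr rfl fun k _ => ?_
  rw [show w * (C (u k) * X ^ (k : ℕ)) = C (u k) * (w * X ^ (k : ℕ)) by ring, coeff_C_mul,
    coeff_mul_X_pow', if_pos (by omega)]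

lemma coeff_mul_sum_C_X_pow {n : ℕ} (h : ℂ[X]) (w : Fin n → ℂ) (m : ℕ) :
    (h * ∑ k : Fin n, C (w k) * X ^ (k : ℕ)).coeff m
      = ∑ j : Fin n, if (j : ℕ) ≤ m then w j * h.coeff (m - (j : ℕ)) else 0 := by
  rw [Finset.mul_sum, finset_sum_coeff]
  refine Finset.sum_congr rfl fun j _ => ?_
  rw [show h * (C (w j) * X ^ (j : ℕ)) = C (w j) * (h * X ^ (j : ℕ)) by ring, coeff_C_mul,
    coeff_mul_X_pow']
  split <;> simp

lemma bezout_step6 {n d : ℕ} (f g h f1 g1 : ℂ[X]) (hf1 : f = h * f1) (hg1 : g = h * g1)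
    (hcop : IsCoprime f1 g1) (hhd : h.natDegree = d) (hhz : h ≠ 0) (hgz : g ≠ 0)
    (hfdeg : f.natDegree ≤ n) (hgdeg : g.natDegree = n) (Pv : ℂ[X]) :
    g * ((f * Pv) /ₘ X ^ n) = f * ((g * Pv) /ₘ X ^ n) ↔
      ∀ m : ℕ, d ≤ m → m < n → (h * Pv).coeff m = 0 := by
  have hg1z : g1 ≠ 0 := by
    rintro rfl
    rw [mul_zero] at hg1
    exact hgz hg1
  have hgsplit : g.natDegree = h.natDegree + g1.natDegree := by rw [hg1, natDegree_mul hhz hg1z]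
  have hg1deg : g1.natDegree = n - d := by omega
  have hdn : d ≤ n := by omega
  constructor
  · intro hEq
    have hcan : g1 * ((f * Pv) /ₘ X ^ n) = f1 * ((g * Pv) /ₘ X ^ n) := by
      apply mul_left_cancel₀ hhz
      calc h * (g1 * ((f * Pv) /ₘ X ^ n)) = g * ((f * Pv) /ₘ X ^ n) := by rw [hg1]; ring
        _ = f * ((g * Pv) /ₘ X ^ n) := hEq
        _ = h * (f1 * ((g * Pv) /ₘ X ^ n)) := by rw [hf1]; ring
    obtain ⟨t, ht⟩ : g1 ∣ (g * Pv) /ₘ X ^ n :=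
      (hcop.symm).dvd_of_dvd_mul_left ⟨(f * Pv) /ₘ X ^ n, hcan.symm⟩
    intro m hdm hmn
    have hb := modByMonic_add_div (g * Pv) (X ^ n)
    set b := (g * Pv) %ₘ X ^ n with hbdef
    have he : g1 * (h * Pv - X ^ n * t) = b := by
      calc g1 * (h * Pv - X ^ n * t) = g * Pv - X ^ n * (g1 * t) := by rw [hg1]; ring
        _ = b := by rw [← ht]; linear_combination -hb
    have h2 : (X ^ n * t).coeff m = 0 := by
      rw [coeff_X_pow_mul' t n m, if_neg (by omega)]
    have h1 : (h * Pv - X ^ n * t).coeff m = 0 := by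
      set e := h * Pv - X ^ n * t with hedef
      rcases eq_or_ne e 0 with h0 | h0
      · rw [h0, coeff_zero]
      · have hbz : b ≠ 0 := by rw [← he]; exact mul_ne_zero hg1z h0
        have hdb : b.natDegree < n := by
          rw [natDegree_lt_iff_degree_lt hbz]
          have := degree_modByMonic_lt (g * Pv) (monic_X_pow n)
          rwa [degree_X_pow] at this
        have hnb : b.natDegree = g1.natDegree + e.natDegree := by
          rw [← he, natDegree_mul hg1z h0]
        exact coeff_eq_zero_of_natDegree_lt (by omega)
    calc (h * Pv).coeff m = (h * Pv - X ^ n * t).coeff m + (X ^ n * t).coeff m := by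
          rw [coeff_sub]; ring
      _ = 0 := by rw [h1, h2, add_zero]
  · intro hco
    set t := (h * Pv) /ₘ X ^ n with htdef
    set b1 := (h * Pv) %ₘ X ^ n with hb1def
    have hsum : b1 + X ^ n * t = h * Pv := modByMonic_add_div _ (X ^ n)
    have hb1deglt : b1.degree < (X ^ n : ℂ[X]).degree := degree_modByMonic_lt _ (monic_X_pow n)
    have hb1co : ∀ m : ℕ, d ≤ m → b1.coeff m = 0 := by
      intro m hdm
      rcases lt_or_ge m n with hmn | hmn
      · have hx : b1.coeff m = (h * Pv).coeff m - (X ^ n * t).coeff m := by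
          rw [← hsum, coeff_add]; ring
        rw [hx, hco m hdm hmn, coeff_X_pow_mul' t n m, if_neg (by omega), zero_sub, neg_zero]
      · apply coeff_eq_zero_of_degree_lt
        refine lt_of_lt_of_le hb1deglt ?_
        rw [degree_X_pow]
        exact_mod_cast hmn
    have hb1d : b1.natDegree < d ∨ b1 = 0 := by
      rcases eq_or_ne b1 0 with h0 | h0
      · right; exact h0
      · left
        by_contra hle
        push_neg at hle
        exact (mt leadingCoeff_eq_zero.mp h0) (hb1co _ hle)
    have hf1deg : f1.natDegree ≤ n - d := by
      rcases eq_or_ne f1 0 with h0 | h0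
      · simp [h0]
      · have hfsplit : f.natDegree = h.natDegree + f1.natDegree := by
          rw [hf1, natDegree_mul hhz h0]
        omega
    have hmulz : ∀ p : ℂ[X], p.natDegree ≤ n - d → ∀ k : ℕ, (p * b1).coeff (n + k) = 0 := by
      intro p hp k
      rcases hb1d with hlt | h0
      · apply coeff_eq_zero_of_natDegree_lt
        refine lt_of_le_of_lt natDegree_mul_le ?_
        omega
      · rw [h0, mul_zero, coeff_zero]
    have hA : (f * Pv) /ₘ X ^ n = f1 * t := by
      ext k
      rw [coeff_divByMonic_X_pow,
        show f * Pv = f1 * b1 + X ^ n * (f1 * t) by rw [hf1]; linear_combination -f1 * hsum,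
        coeff_add, hmulz f1 hf1deg k, Nat.add_comm n k, coeff_X_pow_mul, zero_add]
    have hB : (g * Pv) /ₘ X ^ n = g1 * t := by
      ext k
      rw [coeff_divByMonic_X_pow,
        show g * Pv = g1 * b1 + X ^ n * (g1 * t) by rw [hg1]; linear_combination -g1 * hsum,
        coeff_add, hmulz g1 (le_of_eq hg1deg) k, Nat.add_comm n k, coeff_X_pow_mul, zero_add]
    rw [hA, hB, hf1, hg1]
    ring

/-- If `deg f ≤ n`, `deg g = n` and `gcd(f,g)` has degree `d`, then the kernel of the
Bezout matrix `B(f,g)` has dimension exactly `d`. -/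
theorem bezoutMatrix_ker_dim (n d : ℕ) (f g : Polynomial ℂ)
    (hf : f.natDegree ≤ n) (hg : g.natDegree = n)
    (hd : (EuclideanDomain.gcd f g).natDegree = d) :
    Module.finrank ℂ (LinearMap.ker (Matrix.toLin' (bezoutMatrix n f g))) = d := by
  rcases Nat.eq_zero_or_pos n with hn0 | hn
  · subst hn0
    have hd0 : d = 0 := by
      by_cases hgz : g = 0
      · rw [hgz, EuclideanDomain.gcd_zero_right] at hd
        omega
      · have := natDegree_le_of_dvd (EuclideanDomain.gcd_dvd_right f g) hgz
        omega
    have h1 : Module.finrank ℂ (Fin 0 → ℂ) = 0 := by simp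
    have h2 := Submodule.finrank_le (LinearMap.ker (Matrix.toLin' (bezoutMatrix 0 f g)))
    omega
  have hgz : g ≠ 0 := by
    intro h0
    rw [h0, natDegree_zero] at hg
    omega
  set h := EuclideanDomain.gcd f g with hh
  have hhz : h ≠ 0 := by
    rw [hh, Ne, EuclideanDomain.gcd_eq_zero_iff]
    tauto
  have hdn : d ≤ n := by
    rw [← hd, ← hg]
    exact natDegree_le_of_dvd (EuclideanDomain.gcd_dvd_right f g) hgz
  set f1 := f / h with hf1def
  set g1 := g / h with hg1def
  have hf1 : f = h * f1 :=
    (EuclideanDomain.mul_div_cancel' hhz (EuclideanDomain.gcd_dvd_left f g)).symm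
  have hg1 : g = h * g1 :=
    (EuclideanDomain.mul_div_cancel' hhz (EuclideanDomain.gcd_dvd_right f g)).symm
  have hcop : IsCoprime f1 g1 := by
    refine ⟨EuclideanDomain.gcdA f g, EuclideanDomain.gcdB f g, ?_⟩
    apply mul_left_cancel₀ hhz
    rw [mul_one]
    have H := EuclideanDomain.gcd_eq_gcd_ab f g
    calc h * (EuclideanDomain.gcdA f g * f1 + EuclideanDomain.gcdB f g * g1)
        = f * EuclideanDomain.gcdA f g + g * EuclideanDomain.gcdB f g := by
          rw [hf1, hg1]; ring
      _ = h := by rw [hh]; exact H.symm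
  set Kb : ℂ[X][X] := (f.map C * C g - C f * g.map C) /ₘ (X - C X) with hKb
  have hfact1 : (X - C (X : ℂ[X])) * Kb = f.map C * C g - C f * g.map C := by
    have hm : (f.map C * C g - C f * g.map C) %ₘ (X - C (X : ℂ[X])) = 0 := by
      rw [modByMonic_X_sub_C_eq_C_eval, eval_sub, eval_mul, eval_mul, eval_C, eval_C,
        eval_map, eval_map, eval₂_C_X, eval₂_C_X, sub_self, map_zero]
    conv_rhs => rw [← modByMonic_add_div (f.map C * C g - C f * g.map C)
      (X - C (X : ℂ[X]))]
    rw [hm, zero_add, hKb]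
  have hdegN : (f.map C * C g - C f * g.map C).natDegree ≤ n := by
    refine le_trans (natDegree_sub_le _ _) (max_le ?_ ?_)
    · refine le_trans natDegree_mul_le ?_
      rw [natDegree_C, add_zero]
      exact le_trans natDegree_map_le hf
    · refine le_trans natDegree_mul_le ?_
      rw [natDegree_C, zero_add]
      exact le_trans natDegree_map_le (le_of_eq hg)
  have hdegKb : Kb.natDegree < n := by
    rw [hKb, natDegree_divByMonic _ (monic_X_sub_C (X : ℂ[X])), natDegree_X_sub_C]
    omega
  have hfact3 : ∀ s₀ : ℂ, (X - C s₀) * Kb.eval (C s₀)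
      = C (g.eval s₀) * f - C (f.eval s₀) * g := by
    intro s₀
    have h1 := congrArg (Polynomial.eval (C s₀)) hfact1
    rw [eval_mul, eval_sub, eval_X, eval_C, eval_sub, eval_mul, eval_mul, eval_C, eval_C,
      eval_map, eval_map, eval₂_at_apply, eval₂_at_apply] at h1
    linear_combination -h1
  have main : ∀ v : Fin n → ℂ, Matrix.toLin' (bezoutMatrix n f g) v = 0 ↔
      ∀ m : ℕ, d ≤ m → m < n →
        (h * ∑ k : Fin n, C (v (Fin.rev k)) * X ^ (k : ℕ)).coeff m = 0 := by
    intro v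
    set Pv : ℂ[X] := ∑ k : Fin n, C (v (Fin.rev k)) * X ^ (k : ℕ) with hPv
    have hL0 : ∀ w : ℂ[X], (w * Pv).coeff (n - 1) = ∑ j : Fin n, v j * w.coeff (j : ℕ) := by
      intro w
      rw [hPv, coeff_mul_Q]
      rw [show (∑ j : Fin n, v j * w.coeff (j : ℕ))
          = ∑ k : Fin n, v (Fin.revPerm k) * w.coeff ((Fin.revPerm k : Fin n) : ℕ) from
        (Equiv.sum_comp Fin.revPerm (fun j : Fin n => v j * w.coeff (j : ℕ))).symm]
      refine Finset.sum_congr rfl fun k _ => ?_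
      have hv : ((Fin.rev k : Fin n) : ℕ) = n - 1 - (k : ℕ) := by
        rw [Fin.val_rev]; omega
      rw [show (Fin.revPerm k : Fin n) = Fin.rev k from rfl, hv]
    have hmv : Matrix.toLin' (bezoutMatrix n f g) v = 0 ↔
        ∀ i : Fin n, (∑ j : Fin n, v j * (Kb.coeff (i : ℕ)).coeff (j : ℕ)) = 0 := by
      rw [Matrix.toLin'_apply, funext_iff]
      refine forall_congr' fun i => ?_
      simp only [Matrix.mulVec, dotProduct, Pi.zero_apply]
      rw [show (∑ j : Fin n, bezoutMatrix n f g i j * v j)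
          = ∑ j : Fin n, v j * (Kb.coeff (i : ℕ)).coeff (j : ℕ) from
        Finset.sum_congr rfl fun j _ => by
          rw [show bezoutMatrix n f g i j = (Kb.coeff (i : ℕ)).coeff (j : ℕ) from by
            rw [hKb]; rfl, mul_comm]]
    set cw : Fin n → ℂ := fun i => ∑ j : Fin n, v j * (Kb.coeff (i : ℕ)).coeff (j : ℕ) with hcw
    set W : ℂ[X] := ∑ i : Fin n, C (cw i) * X ^ (i : ℕ) with hW
    have hWcoeff : ∀ i : Fin n, W.coeff (i : ℕ) = cw i := by
      intro i
      rw [hW, finset_sum_coeff]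
      rw [Finset.sum_eq_single i
        (fun b _ hb => by
          rw [coeff_C_mul_X_pow, if_neg (fun hc => hb (Fin.ext hc.symm))])
        (fun hni => absurd (Finset.mem_univ i) hni)]
      rw [coeff_C_mul_X_pow, if_pos rfl]
    have hWeval : ∀ s₀ : ℂ, W.eval s₀
        = (g * ((f * Pv) /ₘ X ^ n) - f * ((g * Pv) /ₘ X ^ n)).eval s₀ := by
      intro s₀
      have e3 : ∀ j : Fin n, (Kb.eval (C s₀)).coeff (j : ℕ)
          = ∑ i : Fin n, s₀ ^ (i : ℕ) * (Kb.coeff (i : ℕ)).coeff (j : ℕ) := by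
        intro j
        rw [eval_eq_sum_range' hdegKb, finset_sum_coeff,
          ← Fin.sum_univ_eq_sum_range (fun i => (Kb.coeff i * C s₀ ^ i).coeff (j : ℕ)) n]
        refine Finset.sum_congr rfl fun i _ => ?_
        rw [← C_pow, mul_comm, coeff_C_mul]
      have e4 : W.eval s₀ = ∑ j : Fin n, v j * (Kb.eval (C s₀)).coeff (j : ℕ) := by
        calc W.eval s₀ = ∑ i : Fin n, cw i * s₀ ^ (i : ℕ) := by
              rw [hW, eval_finset_sum]
              exact Finset.sum_congr rfl fun i _ => by rw [eval_mul, eval_pow, eval_C, eval_X]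
          _ = ∑ i : Fin n, ∑ j : Fin n,
                v j * (s₀ ^ (i : ℕ) * (Kb.coeff (i : ℕ)).coeff (j : ℕ)) := by
              refine Finset.sum_congr rfl fun i _ => ?_
              rw [hcw, Finset.sum_mul]
              exact Finset.sum_congr rfl fun j _ => by ring
          _ = ∑ j : Fin n, ∑ i : Fin n,
                v j * (s₀ ^ (i : ℕ) * (Kb.coeff (i : ℕ)).coeff (j : ℕ)) := Finset.sum_comm
          _ = ∑ j : Fin n, v j * (Kb.eval (C s₀)).coeff (j : ℕ) := by
              refine Finset.sum_congr rfl fun j _ => ?_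
              rw [e3 j, Finset.mul_sum]
      have e5 : ∑ j : Fin n, v j * (Kb.eval (C s₀)).coeff (j : ℕ)
          = (Kb.eval (C s₀) * Pv).coeff (n - 1) := (hL0 _).symm
      have e6 : (X - C s₀) * (Kb.eval (C s₀) * Pv)
          = (C (g.eval s₀) * f - C (f.eval s₀) * g) * Pv := by
        rw [← mul_assoc, hfact3 s₀]
      have e7 := eval_divByMonic_X_pow hn s₀ _ _ e6
      have e8 : ((C (g.eval s₀) * f - C (f.eval s₀) * g) * Pv) /ₘ X ^ n
          = C (g.eval s₀) * ((f * Pv) /ₘ X ^ n) - C (f.eval s₀) * ((g * Pv) /ₘ X ^ n) := by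
        rw [show (C (g.eval s₀) * f - C (f.eval s₀) * g) * Pv
            = C (g.eval s₀) * (f * Pv) - C (f.eval s₀) * (g * Pv) by ring]
        ext k
        rw [coeff_divByMonic_X_pow, coeff_sub, coeff_sub, coeff_C_mul, coeff_C_mul, coeff_C_mul,
          coeff_C_mul, coeff_divByMonic_X_pow, coeff_divByMonic_X_pow]
      rw [e4, e5, ← e7, e8]
      rw [eval_sub, eval_sub, eval_mul, eval_mul, eval_mul, eval_mul, eval_C, eval_C]
    have hstep6 := bezout_step6 f g h f1 g1 hf1 hg1 hcop hd hhz hgz hf hg Pv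
    rw [hmv]
    constructor
    · intro hc m hdm hmn
      have hW0 : W = 0 := by
        rw [hW]
        refine Finset.sum_eq_zero fun i _ => ?_
        rw [show cw i = 0 from hc i, map_zero, zero_mul]
      have hEq : g * ((f * Pv) /ₘ X ^ n) = f * ((g * Pv) /ₘ X ^ n) := by
        have hz : ∀ s₀ : ℂ, (g * ((f * Pv) /ₘ X ^ n) - f * ((g * Pv) /ₘ X ^ n)).eval s₀ = 0 :=
          fun s₀ => by rw [← hWeval s₀, hW0, eval_zero]
        exact sub_eq_zero.mp (zero_of_eval_zero _ hz)
      exact hstep6.mp hEq m hdm hmn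
    · intro hco i
      have hEq := hstep6.mpr hco
      have hW0 : W = 0 := by
        apply zero_of_eval_zero
        intro s₀
        rw [hWeval s₀, sub_eq_zero_of_eq hEq, eval_zero]
      show cw i = 0
      rw [← hWcoeff i, hW0, coeff_zero]
  -- dimension count
  have hld : h.coeff d ≠ 0 := by
    rw [← hd]
    exact mt leadingCoeff_eq_zero.mp hhz
  let T : (Fin n → ℂ) →ₗ[ℂ] (Fin (n - d) → ℂ) :=
    { toFun := fun w m => (h * ∑ k : Fin n, C (w k) * X ^ (k : ℕ)).coeff (d + (m : ℕ))
      map_add' := by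
        intro w1 w2
        funext m
        simp only [Pi.add_apply]
        rw [show (∑ k : Fin n, C (w1 k + w2 k) * X ^ (k : ℕ))
            = (∑ k : Fin n, C (w1 k) * X ^ (k : ℕ)) + ∑ k : Fin n, C (w2 k) * X ^ (k : ℕ) by
          rw [← Finset.sum_add_distrib]
          exact Finset.sum_congr rfl fun k _ => by rw [C_add, add_mul], mul_add, coeff_add]
      map_smul' := by
        intro c w
        funext m
        simp only [Pi.smul_apply, smul_eq_mul, RingHom.id_apply]
        rw [show (∑ k : Fin n, C (c * w k) * X ^ (k : ℕ))
            = C c * ∑ k : Fin n, C (w k) * X ^ (k : ℕ) by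
          rw [Finset.mul_sum]
          exact Finset.sum_congr rfl fun k _ => by rw [C_mul, mul_assoc],
          show h * (C c * ∑ k : Fin n, C (w k) * X ^ (k : ℕ))
            = C c * (h * ∑ k : Fin n, C (w k) * X ^ (k : ℕ)) by ring, coeff_C_mul] }
  have hTapp : ∀ (w : Fin n → ℂ) (m : Fin (n - d)),
      T w m = (h * ∑ k : Fin n, C (w k) * X ^ (k : ℕ)).coeff (d + (m : ℕ)) := fun _ _ => rfl
  let ρ : (Fin n → ℂ) ≃ₗ[ℂ] (Fin n → ℂ) := LinearEquiv.funCongrLeft ℂ ℂ Fin.revPerm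
  have hρ : ∀ (v : Fin n → ℂ) (k : Fin n), ρ v k = v (Fin.rev k) := fun v k => rfl
  have hker : LinearMap.ker (Matrix.toLin' (bezoutMatrix n f g))
      = LinearMap.ker (T ∘ₗ ρ.toLinearMap) := by
    ext v
    rw [LinearMap.mem_ker, LinearMap.mem_ker, main v, LinearMap.comp_apply,
      LinearEquiv.coe_toLinearMap]
    constructor
    · intro hco
      funext m
      rw [hTapp, Pi.zero_apply]
      have : (m : ℕ) < n - d := m.isLt
      exact hco (d + (m : ℕ)) (Nat.le_add_right d m) (by omega)
    · intro hT m hdm hmn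
      have hm' : m - d < n - d := by omega
      have h2 := congrFun hT ⟨m - d, hm'⟩
      rw [hTapp, Pi.zero_apply] at h2
      rw [show ((⟨m - d, hm'⟩ : Fin (n - d)) : ℕ) = m - d from rfl, show d + (m - d) = m by omega] at h2
      exact h2
  rw [hker, LinearMap.ker_comp, Submodule.comap_equiv_eq_map_symm,
    LinearEquiv.finrank_map_eq]
  -- surjectivity of T
  let N : Matrix (Fin (n - d)) (Fin (n - d)) ℂ :=
    fun m k => if (k : ℕ) ≤ d + (m : ℕ) then h.coeff (d + (m : ℕ) - (k : ℕ)) else 0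
  have hNdiag : ∀ m : Fin (n - d), N m m = h.coeff d := by
    intro m
    show (if (m : ℕ) ≤ d + (m : ℕ) then h.coeff (d + (m : ℕ) - (m : ℕ)) else 0) = h.coeff d
    rw [if_pos (by omega), show d + (m : ℕ) - (m : ℕ) = d by omega]
  have hNdet : IsUnit N.det := by
    have htri : N.det = ∏ m : Fin (n - d), N m m := by
      apply Matrix.det_of_upperTriangular
      intro i j hij
      show (if (j : ℕ) ≤ d + (i : ℕ) then h.coeff (d + (i : ℕ) - (j : ℕ)) else 0) = 0
      have hij' : (j : ℕ) < (i : ℕ) := hij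
      rw [if_pos (by omega)]
      exact coeff_eq_zero_of_natDegree_lt (by omega)
    rw [htri]
    rw [isUnit_iff_ne_zero]
    refine Finset.prod_ne_zero_iff.mpr fun m _ => ?_
    rw [hNdiag m]
    exact hld
  have hTsurj : Function.Surjective T := by
    intro target
    set uu := N⁻¹.mulVec target with huu
    have hNu : N.mulVec uu = target := by
      rw [huu, Matrix.mulVec_mulVec, Matrix.mul_nonsing_inv _ hNdet, Matrix.one_mulVec]
    refine ⟨fun j => if hj : (j : ℕ) < n - d then uu ⟨(j : ℕ), hj⟩ else 0, ?_⟩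
    funext m
    rw [hTapp, coeff_mul_sum_C_X_pow, ← hNu]
    have hstep : ∀ j : Fin n,
        (if (j : ℕ) ≤ d + (m : ℕ) then
          (if hj : (j : ℕ) < n - d then uu ⟨(j : ℕ), hj⟩ else 0) * h.coeff (d + (m : ℕ) - (j : ℕ))
        else 0)
        = (fun jj : ℕ => if hj : jj < n - d then
            (if jj ≤ d + (m : ℕ) then uu ⟨jj, hj⟩ * h.coeff (d + (m : ℕ) - jj) else 0)
          else 0) (j : ℕ) := by
      intro j
      by_cases h1 : (j : ℕ) < n - d <;> by_cases h2 : (j : ℕ) ≤ d + (m : ℕ) <;>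
        simp [h1, h2]
    rw [Finset.sum_congr rfl fun j _ => hstep j,
      Fin.sum_univ_eq_sum_range (fun jj : ℕ => if hj : jj < n - d then
        (if jj ≤ d + (m : ℕ) then uu ⟨jj, hj⟩ * h.coeff (d + (m : ℕ) - jj) else 0) else 0) n,
      ← Finset.sum_subset (Finset.range_subset_range.mpr (show n - d ≤ n by omega))
        (fun x _ hx => by
          rw [dif_neg (by simpa using hx)]),
      ← Fin.sum_univ_eq_sum_range]
    show _ = Matrix.mulVec N uu m
    simp only [Matrix.mulVec, dotProduct]
    refine Finset.sum_congr rfl fun k _ => ?_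
    rw [dif_pos k.isLt]
    show (if (k : ℕ) ≤ d + (m : ℕ) then uu ⟨(k : ℕ), k.isLt⟩ * h.coeff (d + (m : ℕ) - (k : ℕ)) else 0)
      = N m k * uu k
    have hek : (⟨(k : ℕ), k.isLt⟩ : Fin (n - d)) = k := rfl
    rw [hek]
    show _ = (if (k : ℕ) ≤ d + (m : ℕ) then h.coeff (d + (m : ℕ) - (k : ℕ)) else 0) * uu k
    split
    · ring
    · rw [zero_mul]
  have hrange : LinearMap.range T = ⊤ := LinearMap.range_eq_top.mpr hTsurj
  have hrn := LinearMap.finrank_range_add_finrank_ker T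
  rw [hrange, finrank_top] at hrn
  simp only [Module.finrank_pi, Fintype.card_fin] at hrn
  omega
end

section
/- (Hermite) Let f be a complex polynomial of degree n with no real roots, and let f̄(z) = conj(f(conj z)). Let n₊ and n₋ be the number of positive and negative eigenvalues of the Hermitian matrix -i·B(f, f̄). If f and f̄ have no common roots, then f has exactly n₊ roots in the open upper half-plane and n₋ roots in the open lower half-plane (counted with multiplicity). -/
open Polynomial
open Matrix


namespace Herm

noncomputable def NN (f g : Polynomial ℂ) : Polynomial (Polynomial ℂ) :=
  f.map C * C g - C f * g.map C

noncomputable def QQ (f g : Polynomial ℂ) : Polynomial (Polynomial ℂ) :=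
  NN f g /ₘ (X - C X)

lemma monicXCX : (X - C (X : Polynomial ℂ)).Monic := monic_X_sub_C _

lemma bez_div (f g : Polynomial ℂ) : (X - C X) * QQ f g = NN f g := by
  have hroot : (NN f g).IsRoot X := by
    unfold NN
    simp only [IsRoot, eval_sub, eval_mul, eval_C, eval_map, eval₂_C_X]
    ring
  have hdvd : (X - C (X : Polynomial ℂ)) ∣ NN f g := dvd_iff_isRoot.mpr hroot
  have hmod : NN f g %ₘ (X - C X) = 0 := (modByMonic_eq_zero_iff_dvd monicXCX).mpr hdvd
  have := modByMonic_add_div (NN f g) (X - C X)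
  rw [hmod, zero_add] at this
  exact this

lemma NN_coeff (f g : Polynomial ℂ) (i : ℕ) :
    (NN f g).coeff i = C (f.coeff i) * g - f * C (g.coeff i) := by
  unfold NN
  rw [coeff_sub, coeff_mul_C, coeff_C_mul, coeff_map, coeff_map]

lemma NN_coeff_coeff (f g : Polynomial ℂ) (i j : ℕ) :
    ((NN f g).coeff i).coeff j = f.coeff i * g.coeff j - f.coeff j * g.coeff i := by
  rw [NN_coeff, coeff_sub, coeff_C_mul, coeff_mul_C]

/-- outer coefficient vanishing -/
lemma QQ_coeff_outer {m : ℕ} {f g : Polynomial ℂ} (hf : f.natDegree ≤ m) (hg : g.natDegree ≤ m)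
    (i : ℕ) (hi : m ≤ i) : (QQ f g).coeff i = 0 := by
  by_cases hQ : QQ f g = 0
  · rw [hQ, coeff_zero]
  have hNdeg : (NN f g).natDegree ≤ m := by
    unfold NN
    refine le_trans (natDegree_sub_le _ _) ?_
    simp only [max_le_iff]
    constructor
    · refine le_trans (natDegree_mul_le (p := f.map C) (q := C g)) ?_
      rw [natDegree_C, add_zero]
      exact le_trans natDegree_map_le hf
    · refine le_trans (natDegree_mul_le (p := C f) (q := g.map C)) ?_
      rw [natDegree_C, zero_add]
      exact le_trans natDegree_map_le hg
  have heq := bez_div f g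
  have hXCX : (X - C (X : Polynomial ℂ)) ≠ 0 := monicXCX.ne_zero
  have hdeg : (NN f g).natDegree = 1 + (QQ f g).natDegree := by
    rw [← heq, natDegree_mul hXCX hQ]
    congr 1
    exact natDegree_X_sub_C _
  apply coeff_eq_zero_of_natDegree_lt
  omega

/-- inner coefficient vanishing -/
lemma QQ_coeff_inner {m : ℕ} {f g : Polynomial ℂ} (hf : f.natDegree ≤ m) (hg : g.natDegree ≤ m)
    (i j : ℕ) (hj : m ≤ j) : ((QQ f g).coeff i).coeff j = 0 := by
  have hN : ∀ i j : ℕ, m < j → ((NN f g).coeff i).coeff j = 0 := by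
    intro i j hj
    rw [NN_coeff_coeff]
    rw [coeff_eq_zero_of_natDegree_lt (lt_of_le_of_lt hg hj),
        coeff_eq_zero_of_natDegree_lt (lt_of_le_of_lt hf hj)]
    ring
  have heq := bez_div f g
  -- coefficient relations
  have hrel : ∀ i : ℕ, (NN f g).coeff i
      = (if i = 0 then 0 else (QQ f g).coeff (i-1)) - X * (QQ f g).coeff i := by
    intro i
    rw [← heq]
    rw [sub_mul, coeff_sub, coeff_C_mul]
    congr 1
    cases i with
    | zero => simp [mul_coeff_zero]
    | succ i' => simp [coeff_X_mul]
  have main : ∀ i : ℕ, ∀ j : ℕ, m ≤ j → ((QQ f g).coeff i).coeff j = 0 := by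
    intro i
    induction i with
    | zero =>
      intro j hj
      have h0 := hrel 0
      rw [if_pos rfl, zero_sub] at h0
      have h4 := congrArg (fun p => p.coeff (j+1)) h0
      simp only [coeff_neg, coeff_X_mul] at h4
      rw [hN 0 (j+1) (by omega)] at h4
      exact neg_eq_zero.mp h4.symm
    | succ i' ih =>
      intro j hj
      have h1 := hrel (i'+1)
      rw [if_neg (Nat.succ_ne_zero i'), Nat.add_sub_cancel] at h1
      have h2 : X * (QQ f g).coeff (i'+1) = (QQ f g).coeff i' - (NN f g).coeff (i'+1) := by
        rw [h1]; ring
      have h3 := congrArg (fun p => p.coeff (j+1)) h2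
      simp only [coeff_X_mul, coeff_sub] at h3
      rw [ih (j+1) (by omega), hN (i'+1) (j+1) (by omega), sub_zero] at h3
      exact h3
  exact main i j hj

lemma NN_step (α β : ℂ) (g h : Polynomial ℂ) :
    NN ((X - C α) * g) ((X - C β) * h)
      = (X - C (C α)) * C (X - C β) * NN g h
        + (X - C X) * (C (C (α - β)) * (h.map C * C g)) := by
  unfold NN
  simp only [Polynomial.map_mul, Polynomial.map_sub, Polynomial.map_X, Polynomial.map_C,
    C_mul, C_sub]
  ring

lemma QQ_step (α β : ℂ) (g h : Polynomial ℂ) :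
    QQ ((X - C α) * g) ((X - C β) * h)
      = (X - C (C α)) * C (X - C β) * QQ g h + C (C (α - β)) * (h.map C * C g) := by
  have hc : (X - C (X : Polynomial ℂ)) ≠ 0 := monicXCX.ne_zero
  apply mul_left_cancel₀ hc
  rw [mul_add, bez_div, NN_step]
  rw [← bez_div g h]
  ring

lemma coeff_X_sub_C_mul {R : Type*} [CommRing R] (c : R) (P : Polynomial R) (i : ℕ) :
    ((X - C c) * P).coeff i = (if i = 0 then 0 else P.coeff (i-1)) - c * P.coeff i := by
  rw [sub_mul, coeff_sub, coeff_C_mul]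
  congr 1
  cases i with
  | zero => simp [mul_coeff_zero]
  | succ i' => simp [coeff_X_mul]

lemma QQ_step_coeff (α β : ℂ) (g h : Polynomial ℂ) (i j : ℕ) :
    ((QQ ((X - C α) * g) ((X - C β) * h)).coeff i).coeff j
      = ((if i = 0 then 0 else if j = 0 then 0 else ((QQ g h).coeff (i-1)).coeff (j-1))
        - β * (if i = 0 then 0 else ((QQ g h).coeff (i-1)).coeff j))
        - α * ((if j = 0 then 0 else ((QQ g h).coeff i).coeff (j-1))
        - β * ((QQ g h).coeff i).coeff j)
        + (α - β) * (h.coeff i * g.coeff j) := by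
  rw [QQ_step, mul_assoc]
  simp only [coeff_add, coeff_sub, coeff_X_sub_C_mul, coeff_C_mul, coeff_mul_C, coeff_map,
    apply_ite (fun p : Polynomial ℂ => p.coeff j),
    apply_ite (fun p : Polynomial ℂ => p.coeff (j-1)), coeff_zero]
  split_ifs <;> ring

lemma bezoutMatrix_eq {n : ℕ} (f g : Polynomial ℂ) (i j : Fin n) :
    bezoutMatrix n f g i j = ((QQ f g).coeff (i:ℕ)).coeff (j:ℕ) := rfl

noncomputable def Mmat (m : ℕ) (α : ℂ) : Matrix (Fin (m+1)) (Fin m) ℂ :=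
  fun i k => (if (i:ℕ) = (k:ℕ)+1 then 1 else 0) - α * (if (i:ℕ) = (k:ℕ) then 1 else 0)

lemma rowSum (m : ℕ) (α : ℂ) (i : Fin (m+1)) (w : ℕ → ℂ) (hw : ∀ k, m ≤ k → w k = 0) :
    ∑ k : Fin m, Mmat m α i k * w k
      = (if (i:ℕ) = 0 then 0 else w ((i:ℕ)-1)) - α * w i := by
  have hterm : ∀ k : Fin m, Mmat m α i k * w k
      = (if (i:ℕ) = (k:ℕ)+1 then w k else 0) - α * (if (i:ℕ) = (k:ℕ) then w k else 0) := by
    intro k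
    unfold Mmat
    split_ifs <;> ring
  rw [Finset.sum_congr rfl (fun k _ => hterm k), Finset.sum_sub_distrib, ← Finset.mul_sum]
  congr 1
  · by_cases hi : (i:ℕ) = 0
    · rw [if_pos hi]
      apply Finset.sum_eq_zero
      intro k _
      rw [if_neg (by omega)]
    · rw [if_neg hi]
      have hi1 : (i:ℕ) - 1 < m := by omega
      rw [Finset.sum_eq_single ⟨(i:ℕ)-1, hi1⟩]
      · rw [if_pos (by simp; omega)]
      · intro k _ hk
        rw [if_neg]
        intro hc
        apply hk
        apply Fin.ext
        simp only []
        omega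
      · intro hmem; exact absurd (Finset.mem_univ _) hmem
  · congr 1
    by_cases him : (i:ℕ) < m
    · rw [Finset.sum_eq_single ⟨(i:ℕ), him⟩]
      · rw [if_pos (by simp)]
      · intro k _ hk
        rw [if_neg]
        intro hc
        exact hk (Fin.ext (by simp [← hc]))
      · intro hmem; exact absurd (Finset.mem_univ _) hmem
    · rw [hw i (by omega)]
      apply Finset.sum_eq_zero
      intro k _
      rw [if_neg (by omega)]

lemma bezout_step (m : ℕ) (α β : ℂ) (g h : Polynomial ℂ)
    (hg : g.natDegree ≤ m) (hh : h.natDegree ≤ m) :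
    bezoutMatrix (m+1) ((X - C α) * g) ((X - C β) * h)
      = Mmat m α * bezoutMatrix m g h * (Mmat m β)ᵀ
        + Matrix.of (fun i j : Fin (m+1) => (α - β) * (h.coeff (i:ℕ) * g.coeff (j:ℕ))) := by
  classical
  funext i j
  have hb_out : ∀ l : ℕ, ∀ k, m ≤ k → ((QQ g h).coeff k).coeff l = 0 :=
    fun l k hk => by rw [QQ_coeff_outer hg hh k hk, coeff_zero]
  have hb_in : ∀ k l, m ≤ l → ((QQ g h).coeff k).coeff l = 0 :=
    fun k l hl => QQ_coeff_inner hg hh k l hl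
  have hM1 : ∀ l : Fin m, (Mmat m α * bezoutMatrix m g h) i l
      = (if (i:ℕ) = 0 then 0 else ((QQ g h).coeff ((i:ℕ)-1)).coeff (l:ℕ))
        - α * ((QQ g h).coeff (i:ℕ)).coeff (l:ℕ) := by
    intro l
    rw [Matrix.mul_apply]
    exact rowSum m α i (fun k => ((QQ g h).coeff k).coeff (l:ℕ)) (fun k hk => hb_out (l:ℕ) k hk)
  have hM2 : (Mmat m α * bezoutMatrix m g h * (Mmat m β)ᵀ) i j
      = (if (j:ℕ) = 0 then 0 else ((if (i:ℕ) = 0 then 0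
            else ((QQ g h).coeff ((i:ℕ)-1)).coeff ((j:ℕ)-1))
          - α * ((QQ g h).coeff (i:ℕ)).coeff ((j:ℕ)-1)))
        - β * ((if (i:ℕ) = 0 then 0 else ((QQ g h).coeff ((i:ℕ)-1)).coeff (j:ℕ))
          - α * ((QQ g h).coeff (i:ℕ)).coeff (j:ℕ)) := by
    rw [Matrix.mul_apply]
    have hterm : ∀ l : Fin m, (Mmat m α * bezoutMatrix m g h) i l * (Mmat m β)ᵀ l j
        = Mmat m β j l * ((if (i:ℕ) = 0 then 0 else ((QQ g h).coeff ((i:ℕ)-1)).coeff (l:ℕ))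
            - α * ((QQ g h).coeff (i:ℕ)).coeff (l:ℕ)) := by
      intro l
      rw [Matrix.transpose_apply, hM1 l, mul_comm]
    rw [Finset.sum_congr rfl (fun l _ => hterm l)]
    exact rowSum m β j (fun l => (if (i:ℕ) = 0 then 0
        else ((QQ g h).coeff ((i:ℕ)-1)).coeff l) - α * ((QQ g h).coeff (i:ℕ)).coeff l)
      (fun l hl => by
        rw [hb_in ((i:ℕ)-1) l hl, hb_in (i:ℕ) l hl]
        simp)
  rw [bezoutMatrix_eq, QQ_step_coeff, Matrix.add_apply, hM2, Matrix.of_apply]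
  split_ifs <;> ring

lemma sandwich {n n' : ℕ} (A : Matrix (Fin n) (Fin n') ℂ) (c : Fin n' → ℂ) (i j : Fin n) :
    (A * Matrix.diagonal c * Aᴴ) i j = ∑ k, A i k * c k * (starRingEnd ℂ) (A j k) := by
  rw [Matrix.mul_apply]
  apply Finset.sum_congr rfl
  intro k _
  rw [Matrix.mul_diagonal, Matrix.conjTranspose_apply]
  rfl

lemma Mmat_conj (m : ℕ) (α : ℂ) : (Mmat m ((starRingEnd ℂ) α))ᵀ = (Mmat m α)ᴴ := by
  funext k i
  rw [Matrix.transpose_apply, Matrix.conjTranspose_apply]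
  unfold Mmat
  split_ifs <;> simp

lemma univ_val_map_eq_sum (k : ℕ) (w : Fin k → ℝ) :
    Multiset.map w Finset.univ.val = ∑ i : Fin k, ({w i} : Multiset ℝ) := by
  rw [Finset.sum]
  have : (fun i => ({w i} : Multiset ℝ)) = (fun a => ({a} : Multiset ℝ)) ∘ w := rfl
  rw [this, ← Multiset.map_map, Multiset.sum_map_singleton]

lemma univ_val_map_snoc (m : ℕ) (d : Fin m → ℝ) (a : ℝ) :
    Multiset.map (Fin.snoc d a) (Finset.univ.val) = a ::ₘ Multiset.map d Finset.univ.val := by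
  rw [univ_val_map_eq_sum, univ_val_map_eq_sum, Fin.sum_univ_castSucc]
  simp only [Fin.snoc_castSucc, Fin.snoc_last]
  rw [add_comm, ← Multiset.singleton_add]

theorem key : ∀ (m : ℕ) (f : Polynomial ℂ), f.natDegree = m →
    (∀ x : ℝ, f.eval (x:ℂ) ≠ 0) → IsCoprime f (f.map (starRingEnd ℂ)) →
    ∃ (U : Matrix (Fin m) (Fin m) ℂ) (d : Fin m → ℝ), IsUnit U.det ∧
      ((-Complex.I) • bezoutMatrix m f (f.map (starRingEnd ℂ))
        = U * Matrix.diagonal (fun k => (d k : ℂ)) * Uᴴ) ∧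
      Multiset.map d Finset.univ.val = Multiset.map (fun z => 2 * z.im) f.roots := by
  intro m
  induction m with
  | zero =>
    intro f hdeg hreal hcop
    refine ⟨1, fun _ => 0, by simp, ?_, ?_⟩
    · funext i j; exact i.elim0
    · have hf0 : f ≠ 0 := by
        intro h
        rw [h] at hcop
        simp only [Polynomial.map_zero] at hcop
        exact not_isUnit_zero (isCoprime_zero_left.mp hcop)
      have hroots : f.roots = 0 := by
        conv_lhs => rw [Polynomial.eq_C_of_natDegree_eq_zero hdeg]
        exact Polynomial.roots_C _
      rw [hroots]
      simp
  | succ m ih =>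
    intro f hdeg hreal hcop
    have hf0 : f ≠ 0 := by
      intro h
      rw [h, natDegree_zero] at hdeg
      exact Nat.succ_ne_zero m hdeg.symm
    obtain ⟨α, hα⟩ := Complex.exists_root (f := f)
      (by rw [Polynomial.degree_eq_natDegree hf0, hdeg]; exact_mod_cast Nat.succ_pos m)
    set g := f /ₘ (X - C α) with hgdef
    have hfg : (X - C α) * g = f := mul_divByMonic_eq_iff_isRoot.mpr hα
    have hg0 : g ≠ 0 := by
      intro h
      rw [h, mul_zero] at hfg
      exact hf0 hfg.symm
    have hdegg : g.natDegree = m := by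
      have h1 := natDegree_mul (X_sub_C_ne_zero α) hg0
      rw [hfg, natDegree_X_sub_C] at h1
      omega
    set gb := g.map (starRingEnd ℂ) with hgbdef
    have hdeggb : gb.natDegree ≤ m := le_trans natDegree_map_le hdegg.le
    have hfbar : f.map (starRingEnd ℂ) = (X - C ((starRingEnd ℂ) α)) * gb := by
      rw [← hfg]
      simp [Polynomial.map_mul, Polynomial.map_sub, Polynomial.map_X, Polynomial.map_C]
      exact Or.inl rfl
    have hrealg : ∀ x : ℝ, g.eval (x:ℂ) ≠ 0 := by
      intro x hx
      apply hreal x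
      rw [← hfg, eval_mul, hx, mul_zero]
    have hcopg : IsCoprime g gb := by
      have h1 : IsCoprime g (f.map (starRingEnd ℂ)) :=
        IsCoprime.of_isCoprime_of_dvd_left hcop ⟨X - C α, by rw [← hfg]; ring⟩
      exact IsCoprime.of_isCoprime_of_dvd_right h1
        ⟨X - C ((starRingEnd ℂ) α), by rw [hfbar]; ring⟩
    have hIm : α.im ≠ 0 := by
      intro h0
      apply hreal α.re
      have hre : ((α.re : ℝ) : ℂ) = α := Complex.ext rfl (by simp [h0])
      rw [hre]
      exact hα
    have hgbα : gb.eval α ≠ 0 := by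
      intro h0
      obtain ⟨a, b, hab⟩ := hcop
      have h1 : (f.map (starRingEnd ℂ)).eval α = 0 := by
        rw [hfbar, eval_mul, h0, mul_zero]
      have h2 := congrArg (eval α) hab
      rw [eval_add, eval_mul, eval_mul, eval_one, h1, hα, mul_zero, mul_zero] at h2
      exact zero_ne_one (by rw [← add_zero (0:ℂ)]; exact h2)
    obtain ⟨U', d', hU', hdec', hroots'⟩ := ih g hdegg hrealg hcopg
    set Mα := Mmat m α with hMαdef
    set v : Fin (m+1) → ℂ := fun i => gb.coeff (i:ℕ) with hvdef
    have hstep : bezoutMatrix (m+1) f (f.map (starRingEnd ℂ))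
        = Mα * bezoutMatrix m g gb * Mαᴴ
          + Matrix.of (fun i j : Fin (m+1) =>
              (α - (starRingEnd ℂ) α) * (gb.coeff (i:ℕ) * g.coeff (j:ℕ))) := by
      rw [← Mmat_conj]
      rw [hfbar]
      conv_lhs => rw [← hfg]
      exact bezout_step m α ((starRingEnd ℂ) α) g gb hdegg.le hdeggb
    have hstep2 : (-Complex.I) • bezoutMatrix (m+1) f (f.map (starRingEnd ℂ))
        = (Mα * U') * Matrix.diagonal (fun k => (d' k : ℂ)) * (Mα * U')ᴴ
          + Matrix.of (fun i j : Fin (m+1) =>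
              ((2 * α.im : ℝ) : ℂ) * (v i * (starRingEnd ℂ) (v j))) := by
      rw [hstep, smul_add]
      congr 1
      · rw [show (-Complex.I) • (Mα * bezoutMatrix m g gb * Mαᴴ)
            = Mα * ((-Complex.I) • bezoutMatrix m g gb) * Mαᴴ by
            rw [← Matrix.smul_mul, ← Matrix.mul_smul]]
        rw [hdec', Matrix.conjTranspose_mul]
        simp only [Matrix.mul_assoc]
      · funext i j
        simp only [Matrix.smul_apply, Matrix.of_apply, smul_eq_mul]
        have h2 : (starRingEnd ℂ) (v j) = g.coeff (j:ℕ) := by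
          rw [hvdef]
          simp only [hgbdef, coeff_map]
          exact Complex.conj_conj _
        rw [h2]
        have h3 : (-Complex.I) * (α - (starRingEnd ℂ) α) = ((2*α.im:ℝ):ℂ) := by
          rw [Complex.sub_conj]
          push_cast
          linear_combination (-2*(α.im:ℂ)) * Complex.I_sq
        have h4 : v i = gb.coeff (i:ℕ) := rfl
        rw [h4, ← h3]
        ring
    set MU := Mα * U' with hMUdef
    set W : Matrix (Fin (m+1)) (Fin (m+1)) ℂ :=
      Matrix.of (fun i k => Fin.lastCases (v i) (fun k' => MU i k') k) with hWdef
    set d : Fin (m+1) → ℝ := Fin.snoc d' (2 * α.im) with hddef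
    have hWdec : W * Matrix.diagonal (fun k => (d k : ℂ)) * Wᴴ
        = MU * Matrix.diagonal (fun k => (d' k : ℂ)) * MUᴴ
          + Matrix.of (fun i j : Fin (m+1) =>
              ((2*α.im:ℝ):ℂ) * (v i * (starRingEnd ℂ) (v j))) := by
      funext i j
      rw [Matrix.add_apply, sandwich, sandwich, Matrix.of_apply, Fin.sum_univ_castSucc]
      congr 1
      · apply Finset.sum_congr rfl
        intro k _
        rw [hWdef, hddef]
        simp only [Matrix.of_apply, Fin.lastCases_castSucc, Fin.snoc_castSucc]
      · rw [hWdef, hddef]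
        simp only [Matrix.of_apply, Fin.lastCases_last, Fin.snoc_last]
        ring
    have hdec : (-Complex.I) • bezoutMatrix (m+1) f (f.map (starRingEnd ℂ))
        = W * Matrix.diagonal (fun k => (d k : ℂ)) * Wᴴ := by
      rw [hWdec, hstep2]
    -- invertibility of W
    have hWdet : IsUnit W.det := by
      rw [isUnit_iff_ne_zero]
      intro hdet0
      obtain ⟨x, hx0, hWx⟩ := Matrix.exists_mulVec_eq_zero_iff.mpr hdet0
      set x' : Fin m → ℂ := fun k' => x (Fin.castSucc k') with hx'def
      set c : ℂ := x (Fin.last m) with hcdef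
      set y : Fin m → ℂ := U' *ᵥ x' with hydef
      set p : Polynomial ℂ := ∑ k : Fin m, C (y k) * X ^ (k:ℕ) with hpdef
      have hcoeffp : ∀ jn : ℕ, p.coeff jn = if h : jn < m then y ⟨jn, h⟩ else 0 := by
        intro jn
        rw [hpdef, finset_sum_coeff]
        by_cases h : jn < m
        · rw [dif_pos h, Finset.sum_eq_single (⟨jn, h⟩ : Fin m)]
          · rw [coeff_C_mul, coeff_X_pow, if_pos rfl, mul_one]
          · intro k _ hk
            rw [coeff_C_mul, coeff_X_pow, if_neg, mul_zero]
            intro hjk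
            exact hk (Fin.ext hjk.symm)
          · intro hmem; exact absurd (Finset.mem_univ _) hmem
        · rw [dif_neg h]
          apply Finset.sum_eq_zero
          intro k _
          rw [coeff_C_mul, coeff_X_pow, if_neg (by omega), mul_zero]
      have hpcoeff_hi : ∀ jn, m ≤ jn → p.coeff jn = 0 := fun jn h => by
        rw [hcoeffp, dif_neg (by omega)]
      have hWx_i : ∀ i : Fin (m+1), ((X - C α) * p).coeff (i:ℕ) + c * gb.coeff (i:ℕ) = 0 := by
        intro i
        have h1 := congrFun hWx i
        have h1' : ∑ k, W i k * x k = 0 := h1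
        rw [Fin.sum_univ_castSucc] at h1'
        have e0 : ∀ k' : Fin m, W i (Fin.castSucc k') * x (Fin.castSucc k') = MU i k' * x' k' := by
          intro k'
          rw [hWdef]
          simp only [Matrix.of_apply, Fin.lastCases_castSucc]
          rfl
        rw [Finset.sum_congr rfl (fun k' _ => e0 k')] at h1'
        have e1 : ∑ k' : Fin m, MU i k' * x' k' = (Mα *ᵥ y) i := by
          rw [hydef, Matrix.mulVec_mulVec]
          rfl
        rw [e1] at h1'
        have e2 : (Mα *ᵥ y) i = ∑ k : Fin m, Mmat m α i k * p.coeff (k:ℕ) := by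
          show ∑ k : Fin m, Mmat m α i k * y k = _
          apply Finset.sum_congr rfl
          intro k _
          rw [hcoeffp (k:ℕ), dif_pos k.isLt, Fin.eta]
        rw [e2, rowSum m α i p.coeff hpcoeff_hi, ← coeff_X_sub_C_mul] at h1'
        have e3 : W i (Fin.last m) = v i := by
          rw [hWdef]
          simp only [Matrix.of_apply, Fin.lastCases_last]
        rw [e3] at h1'
        rw [← h1']
        rw [hvdef, ← hcdef]
        ring
      have hall : (X - C α) * p + C c * gb = 0 := by
        apply Polynomial.ext
        intro jn
        rw [coeff_add, coeff_zero, coeff_C_mul]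
        by_cases hj : jn < m+1
        · exact hWx_i ⟨jn, hj⟩
        · rw [coeff_X_sub_C_mul, if_neg (by omega), hpcoeff_hi jn (by omega),
            hpcoeff_hi (jn-1) (by omega),
            coeff_eq_zero_of_natDegree_lt (lt_of_le_of_lt hdeggb (by omega))]
          ring
      have hc0 : c = 0 := by
        have h5 := congrArg (eval α) hall
        rw [eval_add, eval_mul, eval_mul, eval_sub, eval_X, eval_C, sub_self, zero_mul,
          zero_add, eval_C, eval_zero] at h5
        exact (mul_eq_zero.mp h5).resolve_right hgbα
      have hp0 : p = 0 := by
        rw [hc0, map_zero, zero_mul, add_zero] at hall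
        rcases mul_eq_zero.mp hall with h | h
        · exact absurd h (X_sub_C_ne_zero α)
        · exact h
      have hy0 : ∀ k : Fin m, y k = 0 := by
        intro k
        have h6 := hcoeffp (k:ℕ)
        rw [dif_pos k.isLt, Fin.eta, hp0, coeff_zero] at h6
        exact h6.symm
      have hy0' : y = 0 := by
        funext k
        exact hy0 k
      have hx'0 : x' = 0 := by
        have h7 : U'⁻¹ *ᵥ (U' *ᵥ x') = x' := by
          rw [Matrix.mulVec_mulVec, Matrix.nonsing_inv_mul _ hU', Matrix.one_mulVec]
        rw [← h7, ← hydef, hy0', Matrix.mulVec_zero]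
      apply hx0
      funext k
      refine Fin.lastCases ?_ ?_ k
      · rw [← hcdef, hc0]
        rfl
      · intro k'
        have := congrFun hx'0 k'
        rw [hx'def] at this
        exact this
    -- roots bookkeeping
    have hrootsf : f.roots = α ::ₘ g.roots := by
      conv_lhs => rw [← hfg]
      rw [Polynomial.roots_mul (by rw [hfg]; exact hf0), Polynomial.roots_X_sub_C,
        Multiset.singleton_add]
    have hdmap : Multiset.map d Finset.univ.val
        = Multiset.map (fun z => 2*z.im) f.roots := by
      rw [hrootsf, Multiset.map_cons, ← hroots', hddef, univ_val_map_snoc]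
    exact ⟨W, d, hWdet, hdec, hdmap⟩




variable {n : ℕ}

/-- real quadratic value of a Hermitian form -/
noncomputable def qv (A : Matrix (Fin n) (Fin n) ℂ) (x : Fin n → ℂ) : ℝ :=
  (star x ⬝ᵥ A *ᵥ x).re

lemma qv_congr (A W : Matrix (Fin n) (Fin n) ℂ) (x : Fin n → ℂ) :
    qv (W * A * Wᴴ) x = qv A (Wᴴ *ᵥ x) := by
  unfold qv
  rw [← mulVec_mulVec, ← mulVec_mulVec, star_mulVec, dotProduct_mulVec, conjTranspose_conjTranspose]

noncomputable def coordSub (p : Fin n → Prop) [DecidablePred p] : Submodule ℂ (Fin n → ℂ) :=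
  LinearMap.ker (LinearMap.funLeft ℂ ℂ (Subtype.val : {k // ¬ p k} → Fin n))

lemma mem_coordSub (p : Fin n → Prop) [DecidablePred p] (x : Fin n → ℂ) :
    x ∈ coordSub p ↔ ∀ k, ¬ p k → x k = 0 := by
  simp only [coordSub, LinearMap.mem_ker, LinearMap.funLeft_apply]
  constructor
  · intro h k hk
    exact congrFun h ⟨k, hk⟩
  · intro h
    funext k
    exact h k.1 k.2

lemma finrank_coordSub (p : Fin n → Prop) [DecidablePred p] :
    Module.finrank ℂ (coordSub p) = Fintype.card {k // p k} := by
  have hsurj : Function.Surjective (LinearMap.funLeft ℂ ℂ (Subtype.val : {k // ¬ p k} → Fin n)) :=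
    LinearMap.funLeft_surjective_of_injective ℂ ℂ _ Subtype.val_injective
  have h := LinearMap.finrank_range_add_finrank_ker
    (LinearMap.funLeft ℂ ℂ (Subtype.val : {k // ¬ p k} → Fin n))
  rw [LinearMap.range_eq_top.mpr hsurj] at h
  have hr : Module.finrank ℂ (⊤ : Submodule ℂ ({k // ¬ p k} → ℂ)) = Fintype.card {k // ¬ p k} := by
    simp [Module.finrank_fintype_fun_eq_card]
  rw [hr] at h
  have h2 : Module.finrank ℂ (Fin n → ℂ) = n := by
    simp [Module.finrank_fintype_fun_eq_card]
  rw [h2] at h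
  have h3 : Fintype.card {k // ¬ p k} + Fintype.card {k // p k} = n := by
    have := Fintype.card_subtype_compl p
    have h4 := Fintype.card_subtype_le p
    simp only [Fintype.card_fin] at this h4 ⊢
    omega
  unfold coordSub
  omega

def PosOn (A : Matrix (Fin n) (Fin n) ℂ) (S : Submodule ℂ (Fin n → ℂ)) : Prop :=
  ∀ x ∈ S, x ≠ 0 → 0 < qv A x

def NonposOn (A : Matrix (Fin n) (Fin n) ℂ) (S : Submodule ℂ (Fin n → ℂ)) : Prop :=
  ∀ x ∈ S, qv A x ≤ 0

lemma posOn_nonposOn_disjoint {A : Matrix (Fin n) (Fin n) ℂ} {S N : Submodule ℂ (Fin n → ℂ)}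
    (hS : PosOn A S) (hN : NonposOn A N) :
    Module.finrank ℂ S + Module.finrank ℂ N ≤ n := by
  have hdisj : S ⊓ N = ⊥ := by
    rw [Submodule.eq_bot_iff]
    intro x hx
    by_contra hx0
    exact absurd (hN x hx.2) (not_le.mpr (hS x hx.1 hx0))
  have := Submodule.finrank_sup_add_finrank_inf_eq S N
  rw [hdisj] at this
  simp only [finrank_bot, add_zero] at this
  rw [← this]
  have := Submodule.finrank_le (S ⊔ N)
  simpa [Module.finrank_fintype_fun_eq_card] using this

lemma qv_diagonal (d : Fin n → ℝ) (x : Fin n → ℂ) :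
    qv (diagonal (fun k => (d k : ℂ))) x = ∑ k, d k * Complex.normSq (x k) := by
  unfold qv
  rw [dotProduct, Complex.re_sum]
  congr 1
  funext k
  simp [mulVec_diagonal, Pi.star_apply]
  rw [Complex.normSq_apply]
  ring

lemma posOn_diag_pos (d : Fin n → ℝ) :
    PosOn (diagonal (fun k => (d k : ℂ))) (coordSub (fun k => 0 < d k)) := by
  intro x hx hx0
  rw [qv_diagonal]
  rw [mem_coordSub] at hx
  have hne : ∃ k, x k ≠ 0 := by
    by_contra h
    push_neg at h
    exact hx0 (funext h)
  obtain ⟨k0, hk0⟩ := hne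
  have hdk0 : 0 < d k0 := by
    by_contra h
    exact hk0 (hx k0 h)
  apply Finset.sum_pos'
  · intro k _
    by_cases h : 0 < d k
    · exact mul_nonneg h.le (Complex.normSq_nonneg _)
    · rw [hx k h]; simp
  · exact ⟨k0, Finset.mem_univ _, mul_pos hdk0 (Complex.normSq_pos.mpr hk0)⟩

lemma nonposOn_diag (d : Fin n → ℝ) :
    NonposOn (diagonal (fun k => (d k : ℂ))) (coordSub (fun k => ¬ 0 < d k)) := by
  intro x hx
  rw [qv_diagonal]
  rw [mem_coordSub] at hx
  apply Finset.sum_nonpos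
  intro k _
  by_cases h : 0 < d k
  · rw [hx k (by simpa using h)]; simp
  · have : d k ≤ 0 := le_of_not_gt h
    have : d k * Complex.normSq (x k) ≤ 0 := mul_nonpos_of_nonpos_of_nonneg this (Complex.normSq_nonneg _)
    exact this

lemma diag_congr_pos_card_le (d e : Fin n → ℝ) (W : Matrix (Fin n) (Fin n) ℂ)
    (hW : IsUnit W.det)
    (h : diagonal (fun k => (e k : ℂ)) = W * diagonal (fun k => (d k : ℂ)) * Wᴴ) :
    Fintype.card {k // 0 < d k} ≤ Fintype.card {k // 0 < e k} := by
  classical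
  have hWH : IsUnit Wᴴ.det := by
    rw [det_conjTranspose]
    exact hW.star
  have : Invertible Wᴴ := W.conjTranspose.invertibleOfIsUnitDet hWH
  let E : (Fin n → ℂ) ≃ₗ[ℂ] (Fin n → ℂ) := Wᴴ.toLinearEquiv' this
  have hEapp : ∀ x, E x = Wᴴ *ᵥ x := fun x => rfl
  let S : Submodule ℂ (Fin n → ℂ) := Submodule.comap (E : (Fin n → ℂ) →ₗ[ℂ] (Fin n → ℂ))
      (coordSub (fun k => 0 < d k))
  have hSrank : Module.finrank ℂ S = Fintype.card {k // 0 < d k} := by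
    rw [show S = Submodule.map (E.symm : (Fin n → ℂ) →ₗ[ℂ] (Fin n → ℂ))
        (coordSub (fun k => 0 < d k)) from Submodule.comap_equiv_eq_map_symm E _,
      LinearEquiv.finrank_map_eq, finrank_coordSub]
  have hSpos : PosOn (diagonal (fun k => (e k : ℂ))) S := by
    intro x hx hx0
    rw [h, qv_congr]
    refine posOn_diag_pos d (Wᴴ *ᵥ x) (Submodule.mem_comap.mp hx) ?_
    intro h0
    apply hx0
    have h1 : E x = 0 := h0
    simpa using congrArg E.symm h1
  have hN := nonposOn_diag e
  have hle := posOn_nonposOn_disjoint hSpos hN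
  rw [hSrank, finrank_coordSub] at hle
  have h3 := Fintype.card_subtype_compl (fun k => 0 < e k)
  have h4 := Fintype.card_subtype_le (fun k : Fin n => 0 < e k)
  simp only [Fintype.card_fin] at h3 h4
  omega

lemma diag_congr_pos_card (d e : Fin n → ℝ) (W : Matrix (Fin n) (Fin n) ℂ)
    (hW : IsUnit W.det)
    (h : diagonal (fun k => (e k : ℂ)) = W * diagonal (fun k => (d k : ℂ)) * Wᴴ) :
    Fintype.card {k // 0 < d k} = Fintype.card {k // 0 < e k} := by
  refine le_antisymm (diag_congr_pos_card_le d e W hW h) ?_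
  have : Invertible W := W.invertibleOfIsUnitDet hW
  refine diag_congr_pos_card_le e d W⁻¹ ?_ ?_
  · exact W.isUnit_nonsing_inv_det hW
  · rw [h]
    rw [conjTranspose_nonsing_inv]
    rw [← Matrix.mul_assoc, ← Matrix.mul_assoc, Matrix.nonsing_inv_mul _ hW]
    rw [Matrix.one_mul, Matrix.mul_assoc, Matrix.mul_nonsing_inv _ (Matrix.det_conjTranspose W ▸ hW.star), Matrix.mul_one]

lemma eig_card_of_decomp {H : Matrix (Fin n) (Fin n) ℂ} (hH : H.IsHermitian)
    (U : Matrix (Fin n) (Fin n) ℂ) (d : Fin n → ℝ) (hU : IsUnit U.det)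
    (hdec : H = U * diagonal (fun k => (d k : ℂ)) * Uᴴ) :
    Fintype.card {i // 0 < hH.eigenvalues i} = Fintype.card {k // 0 < d k} ∧
    Fintype.card {i // hH.eigenvalues i < 0} = Fintype.card {k // d k < 0} := by
  classical
  set V : Matrix (Fin n) (Fin n) ℂ := (hH.eigenvectorUnitary : Matrix (Fin n) (Fin n) ℂ) with hV
  have hVmem : V ∈ Matrix.unitaryGroup (Fin n) ℂ := hH.eigenvectorUnitary.2
  have hV1 : V * star V = 1 := mem_unitaryGroup_iff.mp hVmem
  have hV2 : star V * V = 1 := mem_unitaryGroup_iff'.mp hVmem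
  have hspec := hH.spectral_theorem
  have hdiag : diagonal (fun k => ((hH.eigenvalues k : ℝ) : ℂ))
      = (Vᴴ * U) * diagonal (fun k => (d k : ℂ)) * (Vᴴ * U)ᴴ := by
    have h1 : diagonal (fun k => ((hH.eigenvalues k : ℝ) : ℂ)) = star V * H * V := by
      have h0 := congrArg (fun M => star V * M * V) hspec
      have hV2' : ∀ X : Matrix (Fin n) (Fin n) ℂ, star V * (V * X) = X := by
        intro X; rw [← Matrix.mul_assoc, hV2, Matrix.one_mul]
      rw [h0, Unitary.conjStarAlgAut_apply, ← hV]
      simp only [Matrix.mul_assoc]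
      rw [hV2', hV2, Matrix.mul_one]
      rfl
    rw [h1, hdec]
    rw [conjTranspose_mul, conjTranspose_conjTranspose]
    rw [← Matrix.star_eq_conjTranspose V]
    noncomm_ring
  have hdet : IsUnit (Vᴴ * U).det := by
    rw [det_mul]
    refine (IsUnit.mul ?_ hU)
    rw [det_conjTranspose]
    have : IsUnit V.det := by
      apply (Matrix.isUnit_iff_isUnit_det V).mp
      exact (Unitary.toUnits hH.eigenvectorUnitary).isUnit
    exact this.star
  constructor
  · exact (diag_congr_pos_card d hH.eigenvalues (Vᴴ * U) hdet hdiag).symm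
  · have hneg : diagonal (fun k => (((-hH.eigenvalues) k : ℝ) : ℂ))
        = (Vᴴ * U) * diagonal (fun k => (((-d) k : ℝ) : ℂ)) * (Vᴴ * U)ᴴ := by
      simp only [Pi.neg_apply, Complex.ofReal_neg]
      rw [← diagonal_neg, ← diagonal_neg, hdiag, Matrix.mul_neg, Matrix.neg_mul]
    have h2 := (diag_congr_pos_card (-d) (-hH.eigenvalues) (Vᴴ * U) hdet hneg).symm
    calc Fintype.card {i // hH.eigenvalues i < 0}
        = Fintype.card {i // 0 < (-hH.eigenvalues) i} := by
          apply Fintype.card_congr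
          apply Equiv.subtypeEquivRight
          intro k; simp
      _ = Fintype.card {k // 0 < (-d) k} := h2
      _ = Fintype.card {k // d k < 0} := by
          apply Fintype.card_congr
          apply Equiv.subtypeEquivRight
          intro k; simp


lemma count_lemma {n : ℕ} (d : Fin n → ℝ) (s : Multiset ℂ) (q : ℂ → ℝ)
    (hd : Multiset.map d Finset.univ.val = Multiset.map q s)
    (p : ℝ → Prop) [DecidablePred p] :
    Fintype.card {k // p (d k)} = (s.filter (fun z => p (q z))).card := by
  classical
  rw [Fintype.card_subtype, Finset.card_def, Finset.filter_val]
  have h1 : Multiset.filter (fun k => p (d k)) Finset.univ.val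
      = Multiset.filter (p ∘ d) Finset.univ.val := rfl
  rw [h1]
  have h2 : Multiset.card (Multiset.filter (p ∘ d) Finset.univ.val)
      = Multiset.card (Multiset.filter p (Multiset.map d Finset.univ.val)) := by
    rw [Multiset.filter_map, Multiset.card_map]
  rw [h2, hd, Multiset.filter_map, Multiset.card_map]
  rfl

end Herm

/-- (Hermite) Let `f` have degree `n`, no real roots, and no common roots with its
coefficient-wise conjugate `f̄`.  If `n₊`, `n₋` are the numbers of positive and negative
eigenvalues of the Hermitian matrix `-i·B(f, f̄)`, then `f` has exactly `n₊` roots in the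
open upper half-plane and `n₋` roots in the open lower half-plane (with multiplicity). -/
theorem hermite_root_count (n : ℕ) (f : Polynomial ℂ) (hf : f.natDegree = n)
    (hreal : ∀ x : ℝ, f.eval (x : ℂ) ≠ 0)
    (hcop : IsCoprime f (f.map (starRingEnd ℂ)))
    (hH : ((-Complex.I) • bezoutMatrix n f (f.map (starRingEnd ℂ))).IsHermitian) :
    (f.roots.filter (fun z => 0 < z.im)).card
        = Fintype.card {i : Fin n // 0 < hH.eigenvalues i} ∧
    (f.roots.filter (fun z => z.im < 0)).card
        = Fintype.card {i : Fin n // hH.eigenvalues i < 0} := by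
  classical
  subst hf
  obtain ⟨U, d, hU, hdec, hd⟩ := Herm.key f.natDegree f rfl hreal hcop
  obtain ⟨hpos, hneg⟩ := Herm.eig_card_of_decomp hH U d hU hdec
  constructor
  · rw [hpos, Herm.count_lemma d f.roots (fun z => 2 * z.im) hd (fun r => 0 < r)]
    congr 1
    apply Multiset.filter_congr
    intro z _
    constructor
    · intro h; linarith
    · intro h; linarith
  · rw [hneg, Herm.count_lemma d f.roots (fun z => 2 * z.im) hd (fun r => r < 0)]
    congr 1
    apply Multiset.filter_congr
    intro z _
    constructor
    · intro h; linarith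
    · intro h; linarith
end

section
/- Let g be a real polynomial of degree n with gcd(g, g') = 1 (simple roots) and let B(g, 1) denote the Bezout matrix of g and the constant polynomial 1. Then B(g,1) is invertible, and for distinct roots q, q' of g, the vectors u(q) = (1, q, …, q^{n-1}) and u(q') satisfy u(q)ᵀ B(g,1) u(q') = 0, while u(q)ᵀ B(g,1) u(q) = -g'(q) · (leading coefficient factor); in particular u(q)ᵀ B(g,1) u(q) ≠ 0 for each root q. -/
open Polynomial

open Finset Matrix


noncomputable def P (G : Polynomial ℂ) : Polynomial (Polynomial ℂ) :=
  (G.map C - C G) /ₘ (X - C X)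

lemma div_identity (G : Polynomial ℂ) :
    (X - C (X : Polynomial ℂ)) * P G = G.map C - C G := by
  have hdvd : (X - C (X : Polynomial ℂ)) ∣ (G.map C - C G) := by
    rw [dvd_iff_isRoot]
    simp [IsRoot, eval_map, eval₂_C_X]
  have h := modByMonic_add_div (G.map C - C G) (X - C (X : Polynomial ℂ))
  rwa [(modByMonic_eq_zero_iff_dvd (monic_X_sub_C _)).mpr hdvd, zero_add] at h

lemma div_derivative (G : Polynomial ℂ) :
    P G + (X - C (X : Polynomial ℂ)) * derivative (P G) = (derivative G).map C := by
  have h := congrArg derivative (div_identity G)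
  rw [derivative_mul, derivative_sub, derivative_X, derivative_C, sub_zero, one_mul,
    derivative_sub, derivative_map, derivative_C, sub_zero] at h
  exact h

lemma comp_ev (q' : ℂ) : (evalRingHom q').comp (C : ℂ →+* Polynomial ℂ) = RingHom.id ℂ := by
  ext a; simp

lemma val_offdiag (G : Polynomial ℂ) (q q' : ℂ) :
    (q - q') * eval q ((P G).map (evalRingHom q')) = eval q G - eval q' G := by
  have h := congrArg (fun p => eval q (p.map (evalRingHom q'))) (div_identity G)
  simpa [Polynomial.map_mul, Polynomial.map_sub, Polynomial.map_map, comp_ev, Polynomial.map_id]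
    using h

lemma val_diag (G : Polynomial ℂ) (q : ℂ) :
    eval q ((P G).map (evalRingHom q)) = eval q (derivative G) := by
  have h := congrArg (fun p => eval q (p.map (evalRingHom q))) (div_derivative G)
  simpa [Polynomial.map_mul, Polynomial.map_sub, Polynomial.map_add, Polynomial.map_map,
    comp_ev, Polynomial.map_id] using h

lemma P_eq_Q (G : Polynomial ℂ) :
    P G = ∑ k ∈ range (G.natDegree + 1),
      C (C (G.coeff k)) * ∑ a ∈ range k, X ^ a * (C (X : Polynomial ℂ)) ^ (k - 1 - a) := by
  set N := G.natDegree
  set Q : Polynomial (Polynomial ℂ) := ∑ k ∈ range (N + 1),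
      C (C (G.coeff k)) * ∑ a ∈ range k, X ^ a * (C (X : Polynomial ℂ)) ^ (k - 1 - a) with hQdef
  have hG : G = ∑ k ∈ range (N + 1), C (G.coeff k) * X ^ k := by
    conv_lhs => rw [G.as_sum_range' (N + 1) (Nat.lt_succ_self _)]
    simp [C_mul_X_pow_eq_monomial]
  have hmul : (X - C (X : Polynomial ℂ)) * Q = G.map C - C G := by
    have h1 : (X - C (X : Polynomial ℂ)) * Q
        = ∑ k ∈ range (N + 1), C (C (G.coeff k)) * (X ^ k - (C (X : Polynomial ℂ)) ^ k) := by
      rw [hQdef, Finset.mul_sum]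
      refine Finset.sum_congr rfl fun k _ => ?_
      rw [← geom_sum₂_mul X (C (X : Polynomial ℂ)) k]
      ring
    rw [h1]
    have h2 : G.map C = ∑ k ∈ range (N + 1), C (C (G.coeff k)) * X ^ k := by
      conv_lhs => rw [hG]
      simp [Polynomial.map_sum]
    have h3 : (C G : Polynomial (Polynomial ℂ)) = ∑ k ∈ range (N + 1),
        C (C (G.coeff k)) * (C (X : Polynomial ℂ)) ^ k := by
      conv_lhs => rw [hG]
      simp [map_sum, _root_.map_mul, _root_.map_pow]
    rw [h2, h3, ← Finset.sum_sub_distrib]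
    refine Finset.sum_congr rfl fun k _ => ?_
    ring
  have hne : (X - C (X : Polynomial ℂ)) ≠ 0 := (monic_X_sub_C _).ne_zero
  exact mul_left_cancel₀ hne (by rw [div_identity, hmul])

lemma coeff_coeff_P (G : Polynomial ℂ) (i j : ℕ) :
    ((P G).coeff i).coeff j = G.coeff (i + j + 1) := by
  rw [P_eq_Q]
  rw [finset_sum_coeff, finset_sum_coeff]
  have h1 : ∀ k ∈ range (G.natDegree + 1),
      ((C (C (G.coeff k)) * ∑ a ∈ range k, X ^ a * (C (X : Polynomial ℂ)) ^ (k - 1 - a)).coeff i).coeff j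
      = if k = i + j + 1 then G.coeff k else 0 := by
    intro k hk
    have h2 : (∑ a ∈ range k, X ^ a * (C (X : Polynomial ℂ)) ^ (k - 1 - a)).coeff i
        = if i < k then (X : Polynomial ℂ) ^ (k - 1 - i) else 0 := by
      rw [finset_sum_coeff]
      have : ∀ a ∈ range k, (X ^ a * (C (X : Polynomial ℂ)) ^ (k - 1 - a)).coeff i
          = if a = i then (X : Polynomial ℂ) ^ (k - 1 - a) else 0 := by
        intro a _
        rw [← C_pow, mul_comm, C_mul_X_pow_eq_monomial, coeff_monomial]
      rw [Finset.sum_congr rfl this, Finset.sum_ite_eq' (range k) i]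
      simp [Finset.mem_range]
    rw [coeff_C_mul, h2, coeff_C_mul, apply_ite (fun p => Polynomial.coeff p j),
      coeff_X_pow, coeff_zero]
    split_ifs <;> first | (exfalso; omega) | simp
  rw [Finset.sum_congr rfl h1, Finset.sum_ite_eq' (range (G.natDegree + 1)) (i + j + 1)]
  simp only [Finset.mem_range]
  split_ifs with h
  · rfl
  · exact (coeff_eq_zero_of_natDegree_lt (by omega)).symm

lemma natDegree_lt_of_coeff_eq_zero {R : Type*} [Semiring R] (p : Polynomial R) {n : ℕ}
    (hn : 0 < n) (h : ∀ m, n ≤ m → p.coeff m = 0) : p.natDegree < n := by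
  by_contra h'
  push_neg at h'
  rcases eq_or_ne p 0 with rfl | hp
  · simp at h'; omega
  · exact (Polynomial.leadingCoeff_ne_zero.mpr hp) (h _ h')

lemma dot_eq (G : Polynomial ℂ) {n : ℕ} (hn : G.natDegree ≤ n) (h1 : 0 < n) (q q' : ℂ) :
    ∑ i ∈ range n, q ^ i * ∑ j ∈ range n, ((P G).coeff i).coeff j * q' ^ j
    = eval q ((P G).map (evalRingHom q')) := by
  have hz : ∀ i j : ℕ, n ≤ i ∨ n ≤ j → ((P G).coeff i).coeff j = 0 := by
    intro i j hij
    rw [coeff_coeff_P]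
    exact coeff_eq_zero_of_natDegree_lt (by omega)
  have hb : ∀ i, ((P G).coeff i).natDegree < n := fun i =>
    natDegree_lt_of_coeff_eq_zero _ h1 (fun m hm => hz i m (Or.inr hm))
  have hP : (P G).natDegree < n := by
    refine natDegree_lt_of_coeff_eq_zero _ h1 (fun m hm => ?_)
    ext j
    simpa using hz m j (Or.inl hm)
  have hPm : ((P G).map (evalRingHom q')).natDegree < n :=
    lt_of_le_of_lt (natDegree_map_le) hP
  rw [eval_eq_sum_range' hPm]
  refine Finset.sum_congr rfl fun i _ => ?_
  rw [coeff_map, coe_evalRingHom, eval_eq_sum_range' (hb i), Finset.mul_sum, Finset.sum_mul]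
  refine Finset.sum_congr rfl fun j _ => ?_
  ring

/-- For a real polynomial `g` of degree `n` with simple roots (`gcd(g,g') = 1`), the
Bezout matrix `B(g,1)` is invertible; for distinct (complex) roots `q ≠ q'` of `g` the
vectors `u(q) = (1, q, …, q^{n-1})` satisfy `u(q)ᵀ B(g,1) u(q') = 0`, while
`u(q)ᵀ B(g,1) u(q) ≠ 0` for every root `q`. -/
theorem bezout_g_one_orthogonality (n : ℕ) (g : Polynomial ℝ)
    (hg : g.natDegree = n) (hsep : IsCoprime g g.derivative) :
    (bezoutMatrix n (g.map (algebraMap ℝ ℂ)) 1).det ≠ 0 ∧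
    (∀ q q' : ℂ, (g.map (algebraMap ℝ ℂ)).IsRoot q → (g.map (algebraMap ℝ ℂ)).IsRoot q' →
      q ≠ q' →
      dotProduct (fun i : Fin n => q ^ (i : ℕ))
        ((bezoutMatrix n (g.map (algebraMap ℝ ℂ)) 1).mulVec
          (fun i : Fin n => q' ^ (i : ℕ))) = 0) ∧
    (∀ q : ℂ, (g.map (algebraMap ℝ ℂ)).IsRoot q →
      dotProduct (fun i : Fin n => q ^ (i : ℕ))
        ((bezoutMatrix n (g.map (algebraMap ℝ ℂ)) 1).mulVec
          (fun i : Fin n => q ^ (i : ℕ))) ≠ 0) := by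
  have hg0 : g ≠ 0 := by
    rintro rfl
    exact not_isCoprime_zero_zero (by simpa using hsep)
  set G := g.map (algebraMap ℝ ℂ) with hGdef
  have hinj : Function.Injective (algebraMap ℝ ℂ) := RingHom.injective _
  have hG0 : G ≠ 0 := Polynomial.map_ne_zero hg0
  have hGn : G.natDegree = n := by
    rw [hGdef, natDegree_map_eq_of_injective hinj]; exact hg
  have hGsep : G.Separable := by
    have h : g.Separable := hsep
    exact h.map
  have hder : ∀ q : ℂ, G.IsRoot q → eval q (derivative G) ≠ 0 := by
    intro q hq h0
    obtain ⟨a, b, hab⟩ := hGsep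
    have h1 := congrArg (eval q) hab
    have hq' : eval q G = 0 := hq
    simp [hq', h0] at h1
  have hBdef : ∀ i j : Fin n, bezoutMatrix n G 1 i j = ((P G).coeff (i : ℕ)).coeff (j : ℕ) := by
    intro i j
    simp only [bezoutMatrix, P, Polynomial.map_one, _root_.map_one, mul_one, one_mul]
  have hdot : ∀ q q' : ℂ, dotProduct (fun i : Fin n => q ^ (i : ℕ))
      ((bezoutMatrix n G 1).mulVec fun i : Fin n => q' ^ (i : ℕ))
      = ∑ i ∈ range n, q ^ i * ∑ j ∈ range n, ((P G).coeff i).coeff j * q' ^ j := by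
    intro q q'
    simp only [dotProduct, Matrix.mulVec, hBdef]
    calc ∑ i : Fin n, q ^ (i : ℕ) * ∑ j : Fin n, ((P G).coeff (i : ℕ)).coeff (j : ℕ) * q' ^ (j : ℕ)
        = ∑ i : Fin n, (fun i : ℕ => q ^ i * ∑ j ∈ range n, ((P G).coeff i).coeff j * q' ^ j) (i : ℕ) := by
          refine Finset.sum_congr rfl fun i _ => ?_
          simp only
          rw [← Fin.sum_univ_eq_sum_range (fun j => ((P G).coeff (i : ℕ)).coeff j * q' ^ j) n]
      _ = _ := Fin.sum_univ_eq_sum_range (fun i : ℕ => q ^ i * ∑ j ∈ range n, ((P G).coeff i).coeff j * q' ^ j) n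
  rcases Nat.eq_zero_or_pos n with rfl | hpos
  · have hcon : ∀ q : ℂ, ¬ G.IsRoot q := by
      intro q hq
      have hgC : g = Polynomial.C (g.coeff 0) := eq_C_of_natDegree_eq_zero hg
      rw [hGdef, hgC] at hq
      simp only [IsRoot, Polynomial.map_C, eval_C] at hq
      have : g.coeff 0 = 0 := by exact_mod_cast (by simpa using hq)
      exact hg0 (by rw [hgC, this, map_zero])
    exact ⟨by simp [Matrix.det_isEmpty], fun q q' hq _ _ => absurd hq (hcon q),
      fun q hq => absurd hq (hcon q)⟩
  · have key1 : ∀ q q' : ℂ, G.IsRoot q → G.IsRoot q' → q ≠ q' →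
        dotProduct (fun i : Fin n => q ^ (i : ℕ))
          ((bezoutMatrix n G 1).mulVec fun i : Fin n => q' ^ (i : ℕ)) = 0 := by
      intro q q' hq hq' hne
      rw [hdot, dot_eq G hGn.le hpos]
      have h2 := val_offdiag G q q'
      rw [show eval q G = 0 from hq, show eval q' G = 0 from hq', sub_zero] at h2
      exact (mul_eq_zero.mp h2).resolve_left (sub_ne_zero_of_ne hne)
    have key2 : ∀ q : ℂ, G.IsRoot q →
        dotProduct (fun i : Fin n => q ^ (i : ℕ))
          ((bezoutMatrix n G 1).mulVec fun i : Fin n => q ^ (i : ℕ)) ≠ 0 := by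
      intro q hq
      rw [hdot, dot_eq G hGn.le hpos, val_diag]
      exact hder q hq
    refine ⟨?_, key1, key2⟩
    -- determinant
    have hsplits : G.roots.card = n := by
      rw [← hGn]
      exact (splits_iff_card_roots.mp (IsAlgClosed.splits G))
    have hnodup : G.roots.Nodup := nodup_roots hGsep
    have hscard : G.roots.toFinset.card = n := by
      rw [Multiset.toFinset_card_of_nodup hnodup]; exact hsplits
    let e := Finset.equivFinOfCardEq hscard
    set r : Fin n → ℂ := fun i => ((e.symm i : G.roots.toFinset) : ℂ) with hr
    have hrroot : ∀ i, G.IsRoot (r i) := by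
      intro i
      have h2 := (e.symm i).2
      rw [Multiset.mem_toFinset, mem_roots hG0] at h2
      exact h2
    have hrinj : Function.Injective r := fun a b hab =>
      e.symm.injective (Subtype.ext hab)
    set V : Matrix (Fin n) (Fin n) ℂ := Matrix.of fun i j => r j ^ (i : ℕ) with hV
    set B := bezoutMatrix n G 1 with hB
    have hentry : ∀ a b, (Vᵀ * B * V) a b
        = dotProduct (fun i : Fin n => (r a) ^ (i : ℕ))
            (B.mulVec fun i : Fin n => (r b) ^ (i : ℕ)) := by
      intro a b
      simp only [Matrix.mul_apply, Matrix.transpose_apply, dotProduct, Matrix.mulVec,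
        Matrix.of_apply, Finset.sum_mul, Finset.mul_sum, hV]
      rw [Finset.sum_comm]
      exact Finset.sum_congr rfl fun i _ => Finset.sum_congr rfl fun j _ => by ring
    have hM : Vᵀ * B * V = Matrix.diagonal fun a => eval (r a) (derivative G) := by
      ext a b
      rcases eq_or_ne a b with rfl | hab
      · rw [hentry, Matrix.diagonal_apply_eq]
        rw [hdot, dot_eq G hGn.le hpos, val_diag]
      · rw [hentry, Matrix.diagonal_apply_ne _ hab]
        exact key1 _ _ (hrroot a) (hrroot b) (fun h => hab (hrinj h))
    intro hB0
    have hdet := congrArg Matrix.det hM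
    rw [Matrix.det_mul, Matrix.det_mul, Matrix.det_diagonal, hB0, mul_zero, zero_mul] at hdet
    exact (Finset.prod_ne_zero_iff.mpr fun a _ => hder (r a) (hrroot a)) hdet.symm
end
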